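/- arXiv:2110.06101 — 10 statements merged into one kernel-verified Lean document; each statement's English description precedes it below -/
import Mathlib

section
/- Let (X_n)_{n≥1} be a sequence of nonempty metric spaces, and for each n ≥ 1 let R_n be a correspondence between X_n and X_{n+1} with dis R_n < 1/2^n. Then there exists a nonempty metric space X such that for every n ≥ 1 there is a correspondence R'_n between X and X_n with dis R'_n ≤ 1/2^{n-1}. (In particular, the sequence X_n converges to X in the Gromov–Hausdorff distance, which proves that the Gromov–Hausdorff class is complete.) -/
open ENNReal

/-- A correspondence between `X` and `Y`: a relation whose projections to both
factors are surjective. -/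
def IsCorrespondence {X Y : Type*} (R : Set (X × Y)) : Prop :=
  (∀ x : X, ∃ y : Y, (x, y) ∈ R) ∧ (∀ y : Y, ∃ x : X, (x, y) ∈ R)

/-- The distortion of a relation `R ⊆ X × Y`:
`sup { |d_X(x,x') − d_Y(y,y')| : (x,y) ∈ R, (x',y') ∈ R }`, valued in `[0,∞]`. -/
noncomputable def dis {X Y : Type*} [MetricSpace X] [MetricSpace Y]
    (R : Set (X × Y)) : ℝ≥0∞ :=
  ⨆ p ∈ R, ⨆ q ∈ R, ENNReal.ofReal |dist p.1 q.1 - dist p.2 q.2|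

/-- The `l`-scaled distortion of a relation `R ⊆ X × Y`:
`sup { |d_X(x,x') − l·d_Y(y,y')| : (x,y) ∈ R, (x',y') ∈ R }`, valued in `[0,∞]`.
Its finiteness is equivalent to finiteness of the Gromov–Hausdorff distance
between `X` and the rescaled space `l·Y`. -/
noncomputable def disScaled {X Y : Type*} [MetricSpace X] [MetricSpace Y]
    (l : ℝ) (R : Set (X × Y)) : ℝ≥0∞ :=
  ⨆ p ∈ R, ⨆ q ∈ R, ENNReal.ofReal |dist p.1 q.1 - l * dist p.2 q.2|

universe u

section Aux

open Filter Topology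

variable {X : ℕ → Type u} [∀ n, MetricSpace (X n)] {R : ∀ n, Set (X n × X (n + 1))}

/-- Compatible sequences. -/
def CSeq (R : ∀ n, Set (X n × X (n + 1))) : Type u :=
  {s : ∀ k, X k // ∀ k, (s k, s (k + 1)) ∈ R k}

lemma dis_le_of_mem {Y Z : Type*} [MetricSpace Y] [MetricSpace Z] {S : Set (Y × Z)}
    {p q : Y × Z} (hp : p ∈ S) (hq : q ∈ S) :
    ENNReal.ofReal |dist p.1 q.1 - dist p.2 q.2| ≤ dis S :=
  le_iSup₂_of_le p hp (le_iSup₂_of_le q hq le_rfl)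

variable (hdis : ∀ n, dis (R n) < ENNReal.ofReal (1 / 2 ^ (n + 1)))
include hdis

lemma step_bound (s t : CSeq R) (k : ℕ) :
    dist (dist (s.1 k) (t.1 k)) (dist (s.1 (k + 1)) (t.1 (k + 1))) ≤ (1 / 2) * (1 / 2) ^ k := by
  have h1 : ENNReal.ofReal |dist (s.1 k) (t.1 k) - dist (s.1 (k + 1)) (t.1 (k + 1))| <
      ENNReal.ofReal (1 / 2 ^ (k + 1)) :=
    lt_of_le_of_lt (dis_le_of_mem (s.2 k) (t.2 k)) (hdis k)
  have h2 : |dist (s.1 k) (t.1 k) - dist (s.1 (k + 1)) (t.1 (k + 1))| < 1 / 2 ^ (k + 1) :=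
    (ENNReal.ofReal_lt_ofReal_iff (by positivity)).mp h1
  rw [Real.dist_eq]
  calc _ ≤ (1 : ℝ) / 2 ^ (k + 1) := h2.le
    _ = (1 / 2) * (1 / 2) ^ k := by rw [pow_succ]; simp only [one_div, inv_pow, mul_inv, mul_comm]

lemma cauchy_dists (s t : CSeq R) :
    ∃ a : ℝ, Tendsto (fun k => dist (s.1 k) (t.1 k)) atTop (𝓝 a) :=
  cauchySeq_tendsto_of_complete
    (cauchySeq_of_le_geometric (1 / 2) (1 / 2) (by norm_num) (step_bound hdis s t))

/-- The limit distance on compatible sequences. -/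
noncomputable def preD (s t : CSeq R) : ℝ := (cauchy_dists hdis s t).choose

lemma preD_tendsto (s t : CSeq R) :
    Tendsto (fun k => dist (s.1 k) (t.1 k)) atTop (𝓝 (preD hdis s t)) :=
  (cauchy_dists hdis s t).choose_spec

lemma preD_bound (s t : CSeq R) (n : ℕ) :
    |preD hdis s t - dist (s.1 n) (t.1 n)| ≤ (1 / 2) ^ n := by
  have := dist_le_of_le_geometric_of_tendsto (1 / 2) (1 / 2) (by norm_num)
    (step_bound hdis s t) (preD_tendsto hdis s t) n
  rw [Real.dist_eq, abs_sub_comm] at this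
  calc |preD hdis s t - dist (s.1 n) (t.1 n)| ≤ 1 / 2 * (1 / 2) ^ n / (1 - 1 / 2) := this
    _ = (1 / 2) ^ n := by ring

/-- The pseudometric on compatible sequences. -/
noncomputable def csMetric : PseudoMetricSpace (CSeq R) where
  dist := preD hdis
  dist_self s := tendsto_nhds_unique (preD_tendsto hdis s s)
    (by simpa using tendsto_const_nhds (x := (0 : ℝ)))
  dist_comm s t := tendsto_nhds_unique (preD_tendsto hdis s t)
    (by simpa only [dist_comm] using preD_tendsto hdis t s)
  dist_triangle s t u := by
    have h := ((preD_tendsto hdis s t).add (preD_tendsto hdis t u)).sub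
      (preD_tendsto hdis s u)
    have h2 : ∀ k, (0 : ℝ) ≤ dist (s.1 k) (t.1 k) + dist (t.1 k) (u.1 k)
        - dist (s.1 k) (u.1 k) := fun k => by
      have := dist_triangle (s.1 k) (t.1 k) (u.1 k); linarith
    have h3 := le_of_tendsto_of_tendsto' tendsto_const_nhds h h2
    show preD hdis s u ≤ preD hdis s t + preD hdis t u
    linarith

end Aux

/-- Completeness of the Gromov–Hausdorff class: given a sequence of nonempty metric
spaces `X 0, X 1, …` (playing the role of `X_1, X_2, …`) and correspondences
`R n` between `X n` and `X (n+1)` with `dis (R n) < 1/2^(n+1)`, there is a nonempty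
metric space `Z` admitting, for each `n`, a correspondence with `X n` of distortion
at most `1/2^n`. -/
theorem gromovHausdorff_class_complete
    (X : ℕ → Type u) [∀ n, MetricSpace (X n)] [∀ n, Nonempty (X n)]
    (R : ∀ n, Set (X n × X (n + 1)))
    (hcorr : ∀ n, IsCorrespondence (R n))
    (hdis : ∀ n, dis (R n) < ENNReal.ofReal (1 / 2 ^ (n + 1))) :
    ∃ (Z : Type u) (mZ : MetricSpace Z), Nonempty Z ∧
      ∀ n, ∃ R' : Set (Z × X n), IsCorrespondence R' ∧
        @dis Z (X n) mZ inferInstance R' ≤ ENNReal.ofReal (1 / 2 ^ n) := by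
  classical
  -- prefixes
  have hpre : ∀ n (x : X n), ∃ t : ∀ k, X k, t n = x ∧ ∀ k < n, (t k, t (k + 1)) ∈ R k := by
    intro n
    induction n with
    | zero =>
      intro x
      refine ⟨Function.update (fun k => Classical.arbitrary (X k)) 0 x, ?_, by omega⟩
      simp
    | succ n ih =>
      intro x
      obtain ⟨p, hp⟩ := (hcorr n).2 x
      obtain ⟨t, ht, htc⟩ := ih p
      refine ⟨Function.update t (n + 1) x, by simp, ?_⟩
      intro k hk
      rcases Nat.lt_or_ge k n with h | h
      · rw [Function.update_of_ne (by omega), Function.update_of_ne (by omega)]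
        exact htc k h
      · have hkn : k = n := by omega
        subst hkn
        rw [Function.update_of_ne (by omega), Function.update_self, ht]
        exact hp
  -- full compatible sequences through a given point
  have hcompat : ∀ n (x : X n), ∃ s : CSeq R, s.1 n = x := by
    intro n x
    obtain ⟨t, ht, htc⟩ := hpre n x
    set s : ∀ k, X k := fun k =>
      Nat.rec (t 0) (fun k sk => if h : k + 1 ≤ n then t (k + 1)
        else ((hcorr k).1 sk).choose) k with hs
    have hsk : ∀ k, k ≤ n → s k = t k := by
      intro k hk
      cases k with
      | zero => rfl
      | succ k => simp only [hs, dif_pos hk]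
    have hcs : ∀ k, (s k, s (k + 1)) ∈ R k := by
      intro k
      rcases Nat.lt_or_ge k n with h | h
      · rw [hsk k (by omega), hsk (k + 1) (by omega)]
        exact htc k h
      · have h1 : s (k + 1) = ((hcorr k).1 (s k)).choose := by
          simp only [hs]
          rw [dif_neg (by omega)]
        rw [h1]
        exact ((hcorr k).1 (s k)).choose_spec
    exact ⟨⟨s, hcs⟩, by show s n = x; rw [hsk n le_rfl, ht]⟩
  letI m : PseudoMetricSpace (CSeq R) := csMetric hdis
  refine ⟨SeparationQuotient (CSeq R), inferInstance, ?_, ?_⟩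
  · obtain ⟨s, _⟩ := hcompat 0 (Classical.arbitrary (X 0))
    exact ⟨SeparationQuotient.mk s⟩
  intro n
  refine ⟨{p | ∃ s : CSeq R, SeparationQuotient.mk s = p.1 ∧ s.1 n = p.2}, ⟨?_, ?_⟩, ?_⟩
  · intro z
    obtain ⟨s, rfl⟩ := SeparationQuotient.surjective_mk z
    exact ⟨s.1 n, s, rfl, rfl⟩
  · intro x
    obtain ⟨s, hs⟩ := hcompat n x
    exact ⟨SeparationQuotient.mk s, s, rfl, hs⟩
  · refine iSup₂_le fun p hp => iSup₂_le fun q hq => ?_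
    obtain ⟨s, hs1, hs2⟩ := hp
    obtain ⟨t, ht1, ht2⟩ := hq
    rw [ENNReal.ofReal_le_ofReal_iff (by positivity)]
    rw [← hs1, ← ht1, ← hs2, ← ht2, SeparationQuotient.dist_mk]
    have := preD_bound hdis s t n
    calc |dist s t - dist (s.1 n) (t.1 n)| = |preD hdis s t - dist (s.1 n) (t.1 n)| := rfl
      _ ≤ (1 / 2) ^ n := this
      _ = 1 / 2 ^ n := by rw [div_pow, one_pow]
end

section
/- Let X and Y be nonempty metric spaces admitting a correspondence between them of finite distortion, and let λ > 0 be a real number. Then there exists a correspondence S between X and X with sup { |d_X(a,a') − λ·d_X(b,b')| : (a,b) ∈ S, (a',b') ∈ S } < ∞ if and only if there exists a correspondence T between Y and Y with sup { |d_Y(a,a') − λ·d_Y(b,b')| : (a,b) ∈ T, (a',b') ∈ T } < ∞. (Equivalently: the set Λ_X of all λ > 0 for which λX lies at finite Gromov–Hausdorff distance from X depends only on the cloud of X, not on the choice of X in the cloud.) -/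
open ENNReal

lemma dis_bound {X Y : Type*} [MetricSpace X] [MetricSpace Y]
    (R : Set (X × Y)) (hdis : dis R < ⊤) :
    ∃ C : ℝ, ∀ p ∈ R, ∀ q ∈ R, |dist p.1 q.1 - dist p.2 q.2| ≤ C := by
  refine ⟨(dis R).toReal, fun p hp q hq => ?_⟩
  have h1 : ENNReal.ofReal |dist p.1 q.1 - dist p.2 q.2| ≤ dis R := by
    refine le_trans ?_ (le_iSup₂ (f := fun p (_ : p ∈ R) =>
      ⨆ q ∈ R, ENNReal.ofReal |dist p.1 q.1 - dist p.2 q.2|) p hp)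
    exact le_iSup₂ (f := fun q (_ : q ∈ R) =>
      ENNReal.ofReal |dist p.1 q.1 - dist p.2 q.2|) q hq
  have := ENNReal.toReal_mono hdis.ne h1
  rwa [ENNReal.toReal_ofReal (abs_nonneg _)] at this

lemma disScaled_bound {X Y : Type*} [MetricSpace X] [MetricSpace Y]
    (l : ℝ) (R : Set (X × Y)) (hdis : disScaled l R < ⊤) :
    ∃ C : ℝ, ∀ p ∈ R, ∀ q ∈ R, |dist p.1 q.1 - l * dist p.2 q.2| ≤ C := by
  refine ⟨(disScaled l R).toReal, fun p hp q hq => ?_⟩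
  have h1 : ENNReal.ofReal |dist p.1 q.1 - l * dist p.2 q.2| ≤ disScaled l R := by
    refine le_trans ?_ (le_iSup₂ (f := fun p (_ : p ∈ R) =>
      ⨆ q ∈ R, ENNReal.ofReal |dist p.1 q.1 - l * dist p.2 q.2|) p hp)
    exact le_iSup₂ (f := fun q (_ : q ∈ R) =>
      ENNReal.ofReal |dist p.1 q.1 - l * dist p.2 q.2|) q hq
  have := ENNReal.toReal_mono hdis.ne h1
  rwa [ENNReal.toReal_ofReal (abs_nonneg _)] at this

lemma disScaled_lt_top_of_bound {X Y : Type*} [MetricSpace X] [MetricSpace Y]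
    (l : ℝ) (R : Set (X × Y)) (C : ℝ)
    (h : ∀ p ∈ R, ∀ q ∈ R, |dist p.1 q.1 - l * dist p.2 q.2| ≤ C) :
    disScaled l R < ⊤ := by
  have : disScaled l R ≤ ENNReal.ofReal C :=
    iSup₂_le fun p hp => iSup₂_le fun q hq =>
      ENNReal.ofReal_le_ofReal (h p hp q hq)
  exact lt_of_le_of_lt this ENNReal.ofReal_lt_top

lemma transfer {X Y : Type*} [MetricSpace X] [MetricSpace Y]
    (R : Set (X × Y)) (hR : IsCorrespondence R) (CR : ℝ)
    (hCR : ∀ p ∈ R, ∀ q ∈ R, |dist p.1 q.1 - dist p.2 q.2| ≤ CR)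
    (lam : ℝ) (hlam : 0 < lam)
    (S : Set (X × X)) (hS : IsCorrespondence S) (hSd : disScaled lam S < ⊤) :
    ∃ T : Set (Y × Y), IsCorrespondence T ∧ disScaled lam T < ⊤ := by
  obtain ⟨CS, hCS⟩ := disScaled_bound lam S hSd
  refine ⟨{q : Y × Y | ∃ p : X × X, (p.1, q.1) ∈ R ∧ (p.2, q.2) ∈ R ∧ p ∈ S},
    ⟨?_, ?_⟩, ?_⟩
  · intro y
    obtain ⟨x, hx⟩ := hR.2 y
    obtain ⟨x', hx'⟩ := hS.1 x
    obtain ⟨y', hy'⟩ := hR.1 x'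
    exact ⟨y', ⟨(x, x'), hx, hy', hx'⟩⟩
  · intro y'
    obtain ⟨x', hx'⟩ := hR.2 y'
    obtain ⟨x, hx⟩ := hS.2 x'
    obtain ⟨y, hy⟩ := hR.1 x
    exact ⟨y, ⟨(x, x'), hy, hx', hx⟩⟩
  · refine disScaled_lt_top_of_bound lam _ ((1 + lam) * CR + CS) ?_
    rintro q ⟨p, h1, h2, hp⟩ q' ⟨p', h1', h2', hp'⟩
    have e1 := hCR (p.1, q.1) h1 (p'.1, q'.1) h1'
    have e2 := hCR (p.2, q.2) h2 (p'.2, q'.2) h2'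
    have e3 := hCS p hp p' hp'
    simp only at e1 e2 e3
    have key : dist q.1 q'.1 - lam * dist q.2 q'.2 =
        (dist q.1 q'.1 - dist p.1 p'.1) + (dist p.1 p'.1 - lam * dist p.2 p'.2)
          + lam * (dist p.2 p'.2 - dist q.2 q'.2) := by ring
    calc |dist q.1 q'.1 - lam * dist q.2 q'.2|
        ≤ |dist q.1 q'.1 - dist p.1 p'.1| + |dist p.1 p'.1 - lam * dist p.2 p'.2|
          + |lam * (dist p.2 p'.2 - dist q.2 q'.2)| := by
          rw [key]; exact abs_add_three _ _ _
      _ ≤ CR + CS + lam * CR := by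
          rw [abs_mul, abs_of_pos hlam]
          gcongr
          rw [abs_sub_comm]; exact e1
      _ = (1 + lam) * CR + CS := by ring

/-- The stabilizer `Λ_X` only depends on the cloud: if `X` and `Y` are at finite
Gromov–Hausdorff distance (i.e., admit a correspondence of finite distortion),
then for every `λ > 0`, the space `λX` is at finite distance from `X` iff `λY`
is at finite distance from `Y`. -/
theorem stabilizer_cloud_invariant {X Y : Type*} [MetricSpace X] [MetricSpace Y]
    [Nonempty X] [Nonempty Y]
    (R : Set (X × Y)) (hR : IsCorrespondence R) (hdis : dis R < ⊤)
    (lam : ℝ) (hlam : 0 < lam) :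
    (∃ S : Set (X × X), IsCorrespondence S ∧ disScaled lam S < ⊤) ↔
      (∃ T : Set (Y × Y), IsCorrespondence T ∧ disScaled lam T < ⊤) := by
  obtain ⟨CR, hCR⟩ := dis_bound R hdis
  constructor
  · rintro ⟨S, hS, hSd⟩
    exact transfer R hR CR hCR lam hlam S hS hSd
  · rintro ⟨T, hT, hTd⟩
    refine transfer (Prod.swap '' R) ⟨?_, ?_⟩ CR ?_ lam hlam T hT hTd
    · intro y; obtain ⟨x, hx⟩ := hR.2 y; exact ⟨x, ⟨(x, y), hx, rfl⟩⟩
    · intro x; obtain ⟨y, hy⟩ := hR.1 x; exact ⟨y, ⟨(x, y), hy, rfl⟩⟩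
    · rintro p ⟨a, ha, rfl⟩ q ⟨b, hb, rfl⟩
      rw [abs_sub_comm]
      exact hCR a ha b hb
end

section
/- Let X and Y be unbounded metric spaces and suppose there exist points x₀ ∈ X and y₀ ∈ Y such that the quantity Δ(r) = inf { |d_X(x,x') − d_Y(y,y')| : x, x' ∈ X with d(x₀,x) ≥ r, d(x₀,x') ≥ r, x ≠ x', and y, y' ∈ Y with d(y₀,y) ≥ r, d(y₀,y') ≥ r, y ≠ y' } tends to ∞ as r → ∞. Then every correspondence R between X and Y satisfies dis R = ∞; consequently, the Gromov–Hausdorff distance between X and Y is infinite. -/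
open ENNReal

private lemma exists_far {X : Type*} [MetricSpace X]
    (hX : EMetric.diam (Set.univ : Set X) = ⊤) (x₀ : X) (C : ℝ) :
    ∃ x : X, C ≤ dist x₀ x := by
  by_contra h
  push_neg at h
  have hle : EMetric.diam (Set.univ : Set X) ≤ ENNReal.ofReal C + ENNReal.ofReal C := by
    apply EMetric.diam_le
    intro a _ b _
    calc edist a b ≤ edist a x₀ + edist x₀ b := edist_triangle _ _ _
      _ ≤ ENNReal.ofReal C + ENNReal.ofReal C := by
          refine add_le_add ?_ ?_
          · rw [edist_dist]
            exact ENNReal.ofReal_le_ofReal (by rw [dist_comm]; exact (h a).le)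
          · rw [edist_dist]
            exact ENNReal.ofReal_le_ofReal (h b).le
  rw [hX, top_le_iff] at hle
  exact (ENNReal.add_lt_top.mpr ⟨ENNReal.ofReal_lt_top, ENNReal.ofReal_lt_top⟩).ne hle

/-- Theorem 4.2: if `X`, `Y` are unbounded and for some `x₀ ∈ X`, `y₀ ∈ Y` the
quantity `Δ(r) = inf { ||xx'| − |yy'|| : x,x' ∉ U_r(x₀), x ≠ x', y,y' ∉ U_r(y₀), y ≠ y' }`
tends to `∞` as `r → ∞`, then every correspondence between `X` and `Y` has infinite
distortion; hence `d_GH(X, Y) = ∞`. -/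
theorem dis_eq_top_of_delta_tendsto_top {X Y : Type*}
    [MetricSpace X] [MetricSpace Y]
    (hX : EMetric.diam (Set.univ : Set X) = ⊤)
    (hY : EMetric.diam (Set.univ : Set Y) = ⊤)
    (x₀ : X) (y₀ : Y)
    (hΔ : Filter.Tendsto
      (fun r : ℝ =>
        ⨅ (x : X) (_ : r ≤ dist x₀ x) (x' : X) (_ : r ≤ dist x₀ x') (_ : x ≠ x')
          (y : Y) (_ : r ≤ dist y₀ y) (y' : Y) (_ : r ≤ dist y₀ y') (_ : y ≠ y'),
          ENNReal.ofReal |dist x x' - dist y y'|)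
      Filter.atTop (nhds ⊤)) :
    ∀ R : Set (X × Y), IsCorrespondence R → dis R = ⊤ := by
  intro R hR
  by_contra hD
  set D : ℝ := (dis R).toReal with hDdef
  have hD0 : 0 ≤ D := ENNReal.toReal_nonneg
  have key : ∀ p ∈ R, ∀ q ∈ R, |dist p.1 q.1 - dist p.2 q.2| ≤ D := by
    intro p hp q hq
    have h1 : ENNReal.ofReal |dist p.1 q.1 - dist p.2 q.2| ≤ dis R :=
      le_iSup₂_of_le p hp (le_iSup₂_of_le q hq le_rfl)
    exact (ENNReal.ofReal_le_iff_le_toReal hD).mp h1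
  obtain ⟨y₁, hy₁⟩ := hR.1 x₀
  set c : ℝ := dist y₀ y₁ with hcdef
  have hc0 : 0 ≤ c := dist_nonneg
  -- pick r ≥ 0 with dis R < Δ r
  have hev : ∀ᶠ r in Filter.atTop, dis R <
      ⨅ (x : X) (_ : r ≤ dist x₀ x) (x' : X) (_ : r ≤ dist x₀ x') (_ : x ≠ x')
        (y : Y) (_ : r ≤ dist y₀ y) (y' : Y) (_ : r ≤ dist y₀ y') (_ : y ≠ y'),
        ENNReal.ofReal |dist x x' - dist y y'| :=
    hΔ.eventually (eventually_gt_nhds (lt_top_iff_ne_top.2 hD))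
  obtain ⟨r₀, hr₀⟩ := Filter.eventually_atTop.mp hev
  set r : ℝ := max r₀ 0 with hrdef
  have hr : dis R <
      ⨅ (x : X) (_ : r ≤ dist x₀ x) (x' : X) (_ : r ≤ dist x₀ x') (_ : x ≠ x')
        (y : Y) (_ : r ≤ dist y₀ y) (y' : Y) (_ : r ≤ dist y₀ y') (_ : y ≠ y'),
        ENNReal.ofReal |dist x x' - dist y y'| := hr₀ r (le_max_left _ _)
  have hr0 : (0 : ℝ) ≤ r := le_max_right _ _
  obtain ⟨x, hx⟩ := exists_far hX x₀ (r + D + c)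
  obtain ⟨x', hx'⟩ := exists_far hX x₀ (dist x₀ x + r + 2 * D + 2 * c + 1)
  obtain ⟨y, hy⟩ := hR.1 x
  obtain ⟨y', hy'⟩ := hR.1 x'
  have kxy : |dist x₀ x - dist y₁ y| ≤ D := key (x₀, y₁) hy₁ (x, y) hy
  have kxy' : |dist x₀ x' - dist y₁ y'| ≤ D := key (x₀, y₁) hy₁ (x', y') hy'
  have hyfar : dist y₀ y ≥ dist x₀ x - D - c := by
    have h1 : dist y₁ y ≥ dist x₀ x - D := by
      have := abs_le.mp kxy
      linarith [this.2]
    have h2 : dist y₀ y ≥ dist y₁ y - c := by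
      have := dist_triangle y₁ y₀ y
      rw [dist_comm y₁ y₀] at this
      linarith
    linarith
  have hy'far : dist y₀ y' ≥ dist x₀ x' - D - c := by
    have h1 : dist y₁ y' ≥ dist x₀ x' - D := by
      have := abs_le.mp kxy'
      linarith [this.2]
    have h2 : dist y₀ y' ≥ dist y₁ y' - c := by
      have := dist_triangle y₁ y₀ y'
      rw [dist_comm y₁ y₀] at this
      linarith
    linarith
  have hynear : dist y₀ y ≤ dist x₀ x + D + c := by
    have h1 : dist y₁ y ≤ dist x₀ x + D := by
      have := abs_le.mp kxy
      linarith [this.1]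
    have h2 : dist y₀ y ≤ c + dist y₁ y := dist_triangle y₀ y₁ y
    linarith
  have hxr : r ≤ dist x₀ x := by linarith
  have hx'r : r ≤ dist x₀ x' := by
    have : 0 ≤ dist x₀ x := dist_nonneg
    linarith
  have hyr : r ≤ dist y₀ y := by linarith
  have hy'r : r ≤ dist y₀ y' := by linarith
  have hxne : x ≠ x' := by
    intro h
    have heq : dist x₀ x = dist x₀ x' := by rw [h]
    linarith
  have hyne : y ≠ y' := by
    intro h
    have heq : dist y₀ y = dist y₀ y' := by rw [h]
    linarith
  have hΔle : (⨅ (a : X) (_ : r ≤ dist x₀ a) (a' : X) (_ : r ≤ dist x₀ a') (_ : a ≠ a')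
        (b : Y) (_ : r ≤ dist y₀ b) (b' : Y) (_ : r ≤ dist y₀ b') (_ : b ≠ b'),
        ENNReal.ofReal |dist a a' - dist b b'|) ≤
      ENNReal.ofReal |dist x x' - dist y y'| :=
    iInf_le_of_le x (iInf_le_of_le hxr (iInf_le_of_le x' (iInf_le_of_le hx'r
      (iInf_le_of_le hxne (iInf_le_of_le y (iInf_le_of_le hyr (iInf_le_of_le y'
      (iInf_le_of_le hy'r (iInf_le _ hyne)))))))))
  have hfin : ENNReal.ofReal |dist x x' - dist y y'| ≤ dis R :=
    le_iSup₂_of_le (x, y) hy (le_iSup₂_of_le (x', y') hy' le_rfl)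
  exact absurd (lt_of_lt_of_le (lt_of_lt_of_le hr hΔle) hfin) (lt_irrefl _)
end

section
/- Let p be a prime number greater than 2. Then there are no positive integers m, l, n, k with m > l and n > k such that p^m − p^l = 2·(p^n − p^k). -/
/-- Helper: if `q^(t+1) ∣ c * q^t` and `q ≠ 0`, then `q ∣ c`. -/
lemma dvd_of_pow_succ_dvd_mul_pow (q c : ℤ) (t : ℕ) (hq : q ≠ 0)
    (h : q ^ (t + 1) ∣ c * q ^ t) : q ∣ c := by
  rw [pow_succ, mul_comm c (q ^ t)] at h
  exact (mul_dvd_mul_iff_left (pow_ne_zero t hq)).mp h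

/-- The number-theoretic core of Example 4.3: for a prime `p > 2` there are no
positive integers `m > l` and `n > k` with `p^m − p^l = 2(p^n − p^k)`. -/
theorem no_solution_pow_sub_eq_two_mul (p : ℕ) (hp : p.Prime) (hp2 : 2 < p) :
    ¬ ∃ m l n k : ℕ, 0 < l ∧ 0 < k ∧ l < m ∧ k < n ∧
      (p : ℤ) ^ m - (p : ℤ) ^ l = 2 * ((p : ℤ) ^ n - (p : ℤ) ^ k) := by
  rintro ⟨m, l, n, k, hl, hk, hlm, hkn, heq⟩
  set q : ℤ := ((p : ℕ) : ℤ) with hq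
  have hq0 : q ≠ 0 := by
    simp [hq]
    exact hp.ne_zero
  have hq1 : ¬ q ∣ 1 := by
    intro h
    have := Int.le_of_dvd one_pos h
    have : (2 : ℤ) < q := by rw [hq]; exact_mod_cast hp2
    omega
  rcases lt_trichotomy l k with hlk | hlk | hlk
  ·
    have h1 : q ^ (l + 1) ∣ q ^ m := pow_dvd_pow q hlm
    have h2 : q ^ (l + 1) ∣ q ^ k := pow_dvd_pow q hlk
    have h3 : q ^ (l + 1) ∣ q ^ n := pow_dvd_pow q (by omega)
    have : q ^ (l + 1) ∣ 1 * q ^ l := by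
      have : (1 : ℤ) * q ^ l = q ^ m + 2 * q ^ k - 2 * q ^ n := by linarith
      rw [this]
      exact dvd_sub (dvd_add h1 (Dvd.dvd.mul_left h2 2)) (Dvd.dvd.mul_left h3 2)
    exact hq1 (dvd_of_pow_succ_dvd_mul_pow q 1 l hq0 this)
  · -- l = k : q^l = 2 q^n - q^m
    subst hlk
    have h1 : q ^ (l + 1) ∣ q ^ m := pow_dvd_pow q hlm
    have h3 : q ^ (l + 1) ∣ q ^ n := pow_dvd_pow q hkn
    have : q ^ (l + 1) ∣ 1 * q ^ l := by
      have : (1 : ℤ) * q ^ l = 2 * q ^ n - q ^ m := by linarith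
      rw [this]
      exact dvd_sub (Dvd.dvd.mul_left h3 2) h1
    exact hq1 (dvd_of_pow_succ_dvd_mul_pow q 1 l hq0 this)
  · -- k < l : 2 q^k = 2 q^n - q^m + q^l, so q ∣ 2
    have h1 : q ^ (k + 1) ∣ q ^ m := pow_dvd_pow q (by omega)
    have h2 : q ^ (k + 1) ∣ q ^ l := pow_dvd_pow q hlk
    have h3 : q ^ (k + 1) ∣ q ^ n := pow_dvd_pow q hkn
    have : q ^ (k + 1) ∣ 2 * q ^ k := by
      have : (2 : ℤ) * q ^ k = 2 * q ^ n - q ^ m + q ^ l := by linarith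
      rw [this]
      exact dvd_add (dvd_sub (Dvd.dvd.mul_left h3 2) h1) h2
    have hdvd : q ∣ 2 := dvd_of_pow_succ_dvd_mul_pow q 2 k hq0 this
    have := Int.le_of_dvd (by norm_num) hdvd
    have h2' : (2 : ℤ) < q := by rw [hq]; exact_mod_cast hp2
    omega
end

section
/- Let p be a prime number greater than 2 and let X = { p^n : n ∈ ℕ, n ≥ 1 } ⊆ ℝ with the metric induced from the real line. Then every correspondence R between X and X satisfies sup { |d(x,x') − 2·d(y,y')| : (x,y) ∈ R, (x',y') ∈ R } = ∞. (Equivalently: the Gromov–Hausdorff distance between X and 2X is infinite, so X is a drop in its cloud.) -/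
open ENNReal

/-- Example 4.3: for a prime `p > 2` and `X = {p, p², p³, …} ⊆ ℝ`, every
correspondence `R` between `X` and `X` has
`sup { |d(x,x') − 2·d(y,y')| : (x,y), (x',y') ∈ R } = ∞`; equivalently,
`d_GH(X, 2X) = ∞`, so `X` is a drop in its cloud. -/
theorem geometric_progression_drop (p : ℕ) (hp : p.Prime) (hp2 : 2 < p)
    (Xs : Set ℝ) (hXs : Xs = {x : ℝ | ∃ n : ℕ, 1 ≤ n ∧ x = (p : ℝ) ^ n})
    (R : Set (Xs × Xs)) (hR : IsCorrespondence R) :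
    disScaled 2 R = ⊤ := by

  by_contra htop
  have hp3 : (3:ℝ) ≤ (p:ℝ) := by exact_mod_cast hp2
  have hp1 : (1:ℝ) < (p:ℝ) := by linarith
  have hbound : ∀ q ∈ R, ∀ q' ∈ R,
      |dist q.1 q'.1 - 2 * dist q.2 q'.2| ≤ (disScaled 2 R).toReal := by
    intro q hq q' hq'
    have h1 : ENNReal.ofReal |dist q.1 q'.1 - 2 * dist q.2 q'.2| ≤ disScaled 2 R :=
      le_iSup₂_of_le q hq (le_iSup₂_of_le q' hq' le_rfl)
    have h2 := ENNReal.toReal_mono htop h1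
    rwa [ENNReal.toReal_ofReal (abs_nonneg _)] at h2
  set C := (disScaled 2 R).toReal with hC
  have hXmem : ∀ n : ℕ, 1 ≤ n → ((p:ℝ)^n) ∈ Xs := by
    intro n hn; rw [hXs]; exact ⟨n, hn, rfl⟩
  obtain ⟨y₀, hy₀⟩ := hR.1 ⟨(p:ℝ)^1, hXmem 1 le_rfl⟩
  obtain ⟨a, ha1, hav⟩ : ∃ n : ℕ, 1 ≤ n ∧ (y₀ : ℝ) = (p:ℝ)^n :=
    (Set.ext_iff.mp hXs (y₀ : ℝ)).mp y₀.2
  obtain ⟨k, hk⟩ := pow_unbounded_of_one_lt (C + (p:ℝ) + 2*(p:ℝ)^a) hp1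
  obtain ⟨y₁, hy₁⟩ := hR.1 ⟨(p:ℝ)^(k+1), hXmem (k+1) (Nat.le_add_left 1 k)⟩
  obtain ⟨m, hm1, hmv⟩ : ∃ n : ℕ, 1 ≤ n ∧ (y₁ : ℝ) = (p:ℝ)^n :=
    (Set.ext_iff.mp hXs (y₁ : ℝ)).mp y₁.2
  have hB := hbound _ hy₁ _ hy₀
  simp only [Subtype.dist_eq, Real.dist_eq] at hB
  rw [hmv, hav] at hB
  -- hB : ||p^(k+1) - p^1| - 2 * |p^m - p^a|| ≤ C
  have hpow : ∀ i j : ℕ, i ≤ j → (p:ℝ)^i ≤ (p:ℝ)^j :=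
    fun i j h => pow_le_pow_right₀ (by linarith) h
  have hppos : ∀ i : ℕ, (0:ℝ) < (p:ℝ)^i := fun i => pow_pos (by linarith) i
  have hsucc : (p:ℝ)^(k+1) = (p:ℝ)^k * p := pow_succ _ _
  have hA : |(p:ℝ)^(k+1) - (p:ℝ)^1| = (p:ℝ)^(k+1) - (p:ℝ)^1 := by
    have := hpow 1 (k+1) (Nat.le_add_left 1 k)
    exact abs_of_nonneg (by linarith)
  rw [hA, pow_one] at hB
  have hkey : (p:ℝ)^k ≤ (p:ℝ)^(k+1) - 2*(p:ℝ)^m ∨ (p:ℝ)^k ≤ 2*(p:ℝ)^m - (p:ℝ)^(k+1) := by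
    rcases le_or_gt m k with h | h
    · left
      have h1 := hpow m k h
      have h2 := hppos k
      nlinarith
    · right
      have h1 := hpow (k+1) m h
      have h2 := hppos k
      nlinarith
  obtain ⟨hB1, hB2⟩ := abs_le.mp hB
  have hstep : (p:ℝ)^k ≤ (p:ℝ)^(k+1) := hpow k (k+1) (Nat.le_succ k)
  have hma := hppos m
  have hpa := hppos a
  rcases abs_cases ((p:ℝ)^m - (p:ℝ)^a) with ⟨he, _⟩ | ⟨he, _⟩ <;>
    rw [he] at hB1 hB2 <;> rcases hkey with hk1 | hk1 <;> linarith
end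

section
/- Let p be a prime number greater than 2 and let X = { p^n : n ∈ ℕ, n ≥ 1 } ⊆ ℝ with the metric induced from the real line. Then there exists a correspondence R between X and X such that sup { |d(x,x') − p·d(y,y')| : (x,y) ∈ R, (x',y') ∈ R } < ∞. (Equivalently: the Gromov–Hausdorff distance between X and pX is finite, so multiplication by p keeps X in its cloud even though multiplication by 2 removes it from the cloud.) -/
open ENNReal

lemma key_lemma (p : ℝ) (hp : 1 ≤ p) (x y x' y' : ℝ)
    (h : (x = p ∧ y = p) ∨ ∃ n : ℕ, 1 ≤ n ∧ x = p ^ (n + 1) ∧ y = p ^ n)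
    (h' : (x' = p ∧ y' = p) ∨ ∃ n : ℕ, 1 ≤ n ∧ x' = p ^ (n + 1) ∧ y' = p ^ n) :
    |dist x x' - p * dist y y'| ≤ p ^ 2 := by
  have hp0 : (0:ℝ) ≤ p := le_trans zero_le_one hp
  have hpow : ∀ n : ℕ, 1 ≤ n → p ≤ p ^ n := fun n hn => by
    calc p = p ^ 1 := (pow_one p).symm
    _ ≤ p ^ n := pow_le_pow_right₀ hp hn
  have hsq : (0:ℝ) ≤ p ^ 2 - p := by nlinarith
  simp only [Real.dist_eq]
  rcases h with ⟨hx, hy⟩ | ⟨m, hm, hx, hy⟩ <;>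
    rcases h' with ⟨hx', hy'⟩ | ⟨n, hn, hx', hy'⟩ <;> subst x y x' y'
  · simp; positivity
  · have h1 : p ≤ p ^ n := hpow n hn
    have h2 : p ≤ p ^ (n+1) := hpow (n+1) (by omega)
    have e1 : |p - p^(n+1)| = p^(n+1) - p := by
      rw [abs_sub_comm]; exact abs_of_nonneg (by linarith)
    have e2 : |p - p^n| = p^n - p := by
      rw [abs_sub_comm]; exact abs_of_nonneg (by linarith)
    have e3 : p^(n+1) - p - p*(p^n - p) = p^2 - p := by rw [pow_succ]; ring
    rw [e1, e2, e3, abs_of_nonneg hsq]; linarith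
  · have h1 : p ≤ p ^ m := hpow m hm
    have h2 : p ≤ p ^ (m+1) := hpow (m+1) (by omega)
    have e1 : |p^(m+1) - p| = p^(m+1) - p := abs_of_nonneg (by linarith)
    have e2 : |p^m - p| = p^m - p := abs_of_nonneg (by linarith)
    have e3 : p^(m+1) - p - p*(p^m - p) = p^2 - p := by rw [pow_succ]; ring
    rw [e1, e2, e3, abs_of_nonneg hsq]; linarith
  · have : p ^ (m+1) - p ^ (n+1) = p * (p ^ m - p ^ n) := by rw [pow_succ, pow_succ]; ring
    rw [this, abs_mul, abs_of_nonneg hp0, sub_self, abs_zero]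
    positivity

/-- Remark 4.4: for a prime `p > 2` and `X = {p, p², p³, …} ⊆ ℝ`, there is a
correspondence `R` between `X` and `X` with
`sup { |d(x,x') − p·d(y,y')| : (x,y), (x',y') ∈ R } < ∞`; equivalently,
`d_GH(X, pX) < ∞`, so multiplication by `p` keeps `X` in its cloud. -/
theorem geometric_progression_stays_under_p (p : ℕ) (hp : p.Prime) (hp2 : 2 < p)
    (Xs : Set ℝ) (hXs : Xs = {x : ℝ | ∃ n : ℕ, 1 ≤ n ∧ x = (p : ℝ) ^ n}) :
    ∃ R : Set (Xs × Xs), IsCorrespondence R ∧ disScaled (p : ℝ) R < ⊤ := by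
  have hp1 : (1:ℝ) ≤ (p:ℝ) := by exact_mod_cast hp.one_lt.le
  have hmem : ∀ n : ℕ, 1 ≤ n → ((p:ℝ) ^ n) ∈ Xs := by
    intro n hn; rw [hXs]; exact ⟨n, hn, rfl⟩
  refine ⟨{q | ((q.1 : ℝ) = p ∧ (q.2 : ℝ) = p) ∨
      ∃ n : ℕ, 1 ≤ n ∧ (q.1 : ℝ) = (p:ℝ) ^ (n+1) ∧ (q.2 : ℝ) = (p:ℝ) ^ n}, ⟨?_, ?_⟩, ?_⟩
  · rintro ⟨x, hx⟩
    rw [hXs] at hx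
    obtain ⟨n, hn, rfl⟩ := hx
    rcases Nat.eq_or_lt_of_le hn with h1 | h1
    · subst h1
      exact ⟨⟨(p:ℝ) ^ 1, hmem 1 le_rfl⟩, Or.inl ⟨pow_one _, pow_one _⟩⟩
    · refine ⟨⟨(p:ℝ) ^ (n-1), hmem (n-1) (by omega)⟩,
        Or.inr ⟨n-1, by omega, ?_, rfl⟩⟩
      simp only
      congr 1
      omega
  · rintro ⟨y, hy⟩
    rw [hXs] at hy
    obtain ⟨n, hn, rfl⟩ := hy
    exact ⟨⟨(p:ℝ) ^ (n+1), hmem (n+1) (by omega)⟩, Or.inr ⟨n, hn, rfl, rfl⟩⟩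
  · refine lt_of_le_of_lt (le_trans ?_ (le_refl (ENNReal.ofReal ((p:ℝ)^2))))
      ENNReal.ofReal_lt_top
    refine iSup₂_le fun q hq => iSup₂_le fun q' hq' => ENNReal.ofReal_le_ofReal ?_
    have : dist q.1 q'.1 = dist (q.1 : ℝ) (q'.1 : ℝ) := rfl
    rw [this, show dist q.2 q'.2 = dist (q.2 : ℝ) (q'.2 : ℝ) from rfl]
    exact key_lemma (p:ℝ) hp1 _ _ _ _ hq hq'
end

section
/- Let q ≥ 2 be a natural number, let φ : ℕ → ℕ be a monotonically increasing function with φ(n) ≥ n for all n, and set X_φ = { q^{φ(n)} : n ∈ ℕ, n ≥ 1 } ⊆ ℝ with the metric induced from the real line. Let λ be a positive rational number, and suppose there exists a correspondence R between X_φ and X_φ with sup { |d(x,x') − λ·d(y,y')| : (x,y), (x',y') ∈ R } < ∞ (i.e., λ·X_φ lies at finite Gromov–Hausdorff distance from X_φ). Then for every M there exist natural numbers n > k > M and m > l > M such that λ = (q^{φ(n)} − q^{φ(k)}) / (q^{φ(m)} − q^{φ(l)}). -/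
open ENNReal

set_option maxHeartbeats 1000000 in
/-- Corollary 5.1: for an integer `q ≥ 2`, an increasing `φ : ℕ → ℕ` with `φ(n) ≥ n`,
and `X_φ = {q^{φ(n)} : n ≥ 1} ⊆ ℝ`, if a positive rational `λ` keeps `X_φ` in its
cloud (i.e., some correspondence `R` between `X_φ` and `X_φ` has
`sup { |d(x,x') − λ·d(y,y')| } < ∞`), then for every `M` there are `n > k > M` and
`m > l > M` with `λ = (q^{φ(n)} − q^{φ(k)}) / (q^{φ(m)} − q^{φ(l)})`. -/
theorem rational_stabilizer_form (q : ℕ) (hq : 2 ≤ q)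
    (φ : ℕ → ℕ) (hmono : StrictMono φ) (hge : ∀ n, n ≤ φ n)
    (Xs : Set ℝ) (hXs : Xs = {x : ℝ | ∃ n : ℕ, 1 ≤ n ∧ x = (q : ℝ) ^ φ n})
    (lam : ℚ) (hlam : 0 < lam)
    (hfin : ∃ R : Set (Xs × Xs), IsCorrespondence R ∧ disScaled (lam : ℝ) R < ⊤) :
    ∀ M : ℕ, ∃ n k m l : ℕ, M < k ∧ k < n ∧ M < l ∧ l < m ∧
      (lam : ℝ) =
        ((q : ℝ) ^ φ n - (q : ℝ) ^ φ k) / ((q : ℝ) ^ φ m - (q : ℝ) ^ φ l) := by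
  intro M
  obtain ⟨R, ⟨hR1, hR2⟩, hdis⟩ := hfin
  have hq1 : (1:ℝ) < (q:ℝ) := by
    have : (2:ℝ) ≤ (q:ℝ) := by exact_mod_cast hq
    linarith
  have hq0 : (0:ℝ) < (q:ℝ) := by linarith
  set lr : ℝ := (lam : ℝ) with hlr
  have hlp : 0 < lr := by rw [hlr]; exact_mod_cast hlam
  set C := (disScaled lr R).toReal with hCdef
  have hC0 : 0 ≤ C := ENNReal.toReal_nonneg
  have hbd : ∀ p ∈ R, ∀ p' ∈ R, |dist p.1 p'.1 - lr * dist p.2 p'.2| ≤ C := by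
    intro p hp p' hp'
    have h1 : ENNReal.ofReal |dist p.1 p'.1 - lr * dist p.2 p'.2| ≤ disScaled lr R :=
      le_iSup₂_of_le p hp (le_iSup₂_of_le p' hp' le_rfl)
    have h2 := ENNReal.toReal_mono hdis.ne h1
    rwa [ENNReal.toReal_ofReal (abs_nonneg _)] at h2
  -- the points of Xs
  have hmem : ∀ n : ℕ, (q:ℝ) ^ φ (n+1) ∈ Xs := by
    intro n; rw [hXs]; exact ⟨n+1, Nat.le_add_left 1 n, rfl⟩
  set Y : ℕ → Xs := fun n => ⟨(q:ℝ) ^ φ (n+1), hmem n⟩ with hY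
  set xs : ℕ → Xs := fun n => (hR2 (Y n)).choose with hxs
  have hxsel : ∀ n, (xs n, Y n) ∈ R := fun n => (hR2 (Y n)).choose_spec
  have hXmem : ∀ x : ℝ, x ∈ Xs → ∃ m, 1 ≤ m ∧ x = (q:ℝ) ^ φ m := by
    intro x hx
    rw [hXs] at hx
    exact hx
  have hgex : ∀ n, ∃ m, 1 ≤ m ∧ ((xs n : ℝ)) = (q:ℝ) ^ φ m :=
    fun n => hXmem _ (xs n).2
  set g : ℕ → ℕ := fun n => (hgex n).choose with hgdef
  have hg : ∀ n, ((xs n : ℝ)) = (q:ℝ) ^ φ (g n) := fun n => (hgex n).choose_spec.2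
  have hxpos : ∀ n, (0:ℝ) < (xs n : ℝ) := by
    intro n; rw [hg n]; positivity
  clear_value g
  clear hgdef
  -- threshold
  obtain ⟨N0, hN0⟩ := exists_nat_ge ((q:ℝ)^φ 1 + (((xs 0 : ℝ)) + (q:ℝ)^φ M + C)/lr)
  set N := max N0 M with hN
  have hgrow : ∀ n, N ≤ n →
      (q:ℝ)^φ 1 + (((xs 0 : ℝ)) + (q:ℝ)^φ M + C)/lr < (q:ℝ)^φ (n+1) := by
    intro n hn
    have h1 : ((n:ℝ)+1) < (2:ℝ)^(n+1) := by
      have := Nat.lt_two_pow_self (n := n+1)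
      exact_mod_cast this
    have h2 : (2:ℝ)^(n+1) ≤ (2:ℝ)^(φ (n+1)) := pow_le_pow_right₀ one_le_two (hge (n+1))
    have h3 : (2:ℝ)^(φ (n+1)) ≤ (q:ℝ)^(φ (n+1)) :=
      pow_le_pow_left₀ (by norm_num) (by exact_mod_cast hq) _
    have h4 : (N0:ℝ) ≤ (n:ℝ) := by
      have : N0 ≤ n := le_trans (le_max_left _ _) hn
      exact_mod_cast this
    linarith
  -- key estimate
  have key : ∀ n, N ≤ n →
      |(((xs n : ℝ)) - lr * (q:ℝ)^φ (n+1)) - (((xs 0 : ℝ)) - lr * (q:ℝ)^φ 1)| ≤ C ∧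
      (q:ℝ)^φ M < ((xs n : ℝ)) := by
    intro n hn
    have hT := hgrow n hn
    have hb := hbd (xs n, Y n) (hxsel n) (xs 0, Y 0) (hxsel 0)
    simp only [Subtype.dist_eq, Real.dist_eq, Nat.zero_add] at hb
    set A := ((xs n : ℝ)) with hA
    set x0 := ((xs 0 : ℝ)) with hx0
    set yn := (q:ℝ)^φ (n+1) with hyn
    set y0 := (q:ℝ)^φ 1 with hy0
    have hy0n : y0 ≤ yn := pow_le_pow_right₀ hq1.le (hmono.monotone (by omega))
    rw [abs_of_nonneg (by linarith : (0:ℝ) ≤ yn - y0)] at hb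
    have hlam2 : x0 + (q:ℝ)^φ M + C < lr * (yn - y0) := by
      have h5 : (x0 + (q:ℝ)^φ M + C)/lr < yn - y0 := by linarith
      calc x0 + (q:ℝ)^φ M + C = ((x0 + (q:ℝ)^φ M + C)/lr) * lr := by field_simp
        _ < (yn - y0) * lr := by
            apply mul_lt_mul_of_pos_right h5 hlp
        _ = lr * (yn - y0) := mul_comm _ _
    have hAp := hxpos n
    have hx0p := hxpos 0
    have hqM : (0:ℝ) < (q:ℝ)^φ M := by positivity
    have habs := abs_le.mp hb
    have hcase : A - x0 = |A - x0| := by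
      rcases abs_cases (A - x0) with ⟨h1, _⟩ | ⟨h1, _⟩
      · exact h1.symm
      · exfalso
        rw [h1] at habs
        linarith [habs.1]
    rw [← hcase] at habs
    constructor
    · rw [abs_le]
      constructor <;> [nlinarith [habs.1]; nlinarith [habs.2]]
    · nlinarith [habs.1]
  -- integer setup
  set a : ℤ := lam.num with hadef
  have ha : 0 < a := Rat.num_pos.mpr hlam
  set b : ℤ := (lam.den : ℤ) with hbdef
  have hbpos : 0 < b := by rw [hbdef]; exact_mod_cast lam.pos
  have hbR : (0:ℝ) < (b:ℝ) := by exact_mod_cast hbpos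
  have hab : lr * (b:ℝ) = (a:ℝ) := by
    rw [hlr, Rat.cast_def, hadef, hbdef]
    push_cast
    field_simp
  set F : ℕ → ℤ := fun n => b * (q:ℤ)^φ (g n) - a * (q:ℤ)^φ (n+1) with hFdef
  have hF : ∀ n, ((F n : ℝ)) = (b:ℝ) * (((xs n : ℝ)) - lr * (q:ℝ)^φ (n+1)) := by
    intro n
    simp only [hFdef]
    rw [hg n]
    push_cast
    linear_combination ((q:ℝ)^φ (n+1)) * hab
  clear_value F
  clear hFdef
  set c : ℝ := ((xs 0 : ℝ)) - lr * (q:ℝ)^φ 1 with hcdef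
  obtain ⟨B, hFbd⟩ : ∃ B : ℤ, ∀ n, N ≤ n → F n ∈ Finset.Icc (-B) B := by
    refine ⟨⌈(b:ℝ) * (|c| + C)⌉, ?_⟩
    set B : ℤ := ⌈(b:ℝ) * (|c| + C)⌉ with hBdef
    intro n hn
    have h1 := (key n hn).1
    have h2 : |((xs n : ℝ)) - lr * (q:ℝ)^φ (n+1)| ≤ |c| + C := by
      calc |((xs n : ℝ)) - lr * (q:ℝ)^φ (n+1)|
          = |((((xs n : ℝ)) - lr * (q:ℝ)^φ (n+1)) - c) + c| := by ring_nf
        _ ≤ |(((xs n : ℝ)) - lr * (q:ℝ)^φ (n+1)) - c| + |c| := abs_add_le _ _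
        _ ≤ |c| + C := by linarith
    have h3 : |(F n : ℝ)| ≤ (b:ℝ) * (|c| + C) := by
      rw [hF n, abs_mul, abs_of_pos hbR]
      exact mul_le_mul_of_nonneg_left h2 hbR.le
    have h4 : ((|F n| : ℤ) : ℝ) ≤ (B:ℝ) := by
      push_cast
      calc |((F n : ℤ) : ℝ)| ≤ (b:ℝ) * (|c| + C) := by exact_mod_cast h3
        _ ≤ (B:ℝ) := Int.le_ceil _
    have h5 : |F n| ≤ B := by exact_mod_cast h4
    rw [Finset.mem_Icc]
    constructor <;> linarith [abs_le.mp h5]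
  -- pigeonhole
  haveI hinf : Infinite {k : ℕ // N ≤ k} :=
    Infinite.of_injective (fun m : ℕ => (⟨N + m, Nat.le_add_right _ _⟩ : {k : ℕ // N ≤ k}))
      (fun a b h => by simpa using h)
  obtain ⟨i, j, hij, hFij⟩ := Finite.exists_ne_map_eq_of_infinite
    (fun n : {k : ℕ // N ≤ k} => (⟨F n.1, hFbd n.1 n.2⟩ : Finset.Icc (-B) B))
  have hFeq : F i.1 = F j.1 := by
    have := congrArg Subtype.val hFij
    simpa using this
  have hne' : i.1 ≠ j.1 := fun h => hij (Subtype.ext h)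
  -- final extraction
  have final : ∀ u v : ℕ, N ≤ u → N ≤ v → u < v → F u = F v →
      ∃ n k m l : ℕ, M < k ∧ k < n ∧ M < l ∧ l < m ∧
        lr = ((q : ℝ) ^ φ n - (q : ℝ) ^ φ k) / ((q : ℝ) ^ φ m - (q : ℝ) ^ φ l) := by
    intro u v hu hv huv hFuv
    have hyy : (q:ℝ)^φ (u+1) < (q:ℝ)^φ (v+1) := pow_lt_pow_right₀ hq1 (hmono (by omega))
    have hcast : (b:ℝ) * (((xs u : ℝ)) - lr * (q:ℝ)^φ (u+1))
        = (b:ℝ) * (((xs v : ℝ)) - lr * (q:ℝ)^φ (v+1)) := by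
      rw [← hF u, ← hF v]; exact_mod_cast congrArg (fun z : ℤ => (z:ℝ)) hFuv
    have hdiff : ((xs u : ℝ)) - lr * (q:ℝ)^φ (u+1) = ((xs v : ℝ)) - lr * (q:ℝ)^φ (v+1) :=
      mul_left_cancel₀ hbR.ne' hcast
    have hxlt : ((xs u : ℝ)) < ((xs v : ℝ)) := by nlinarith
    have hglt : g u < g v := by
      have : (q:ℝ)^φ (g u) < (q:ℝ)^φ (g v) := by rw [← hg u, ← hg v]; exact hxlt
      exact hmono.lt_iff_lt.mp ((pow_lt_pow_iff_right₀ hq1).mp this)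
    have hMgu : M < g u := by
      have h1 := (key u hu).2
      rw [hg u] at h1
      exact hmono.lt_iff_lt.mp ((pow_lt_pow_iff_right₀ hq1).mp h1)
    refine ⟨g v, g u, v+1, u+1, hMgu, hglt, by omega, by omega, ?_⟩
    · rw [eq_div_iff (sub_ne_zero.mpr hyy.ne')]
      have h1 := hg u
      have h2 := hg v
      nlinarith [hdiff]
  rcases lt_or_gt_of_ne hne' with h | h
  · obtain ⟨n, k, m, l, h1, h2, h3, h4, h5⟩ := final i.1 j.1 i.2 j.2 h hFeq
    exact ⟨n, k, m, l, h1, h2, h3, h4, h5⟩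
  · obtain ⟨n, k, m, l, h1, h2, h3, h4, h5⟩ := final j.1 i.1 j.2 i.2 h hFeq.symm
    exact ⟨n, k, m, l, h1, h2, h3, h4, h5⟩
end

section
/- Let q ≥ 2 be an integer, let X_q = { q^n : n ∈ ℤ } ⊆ ℝ with the metric induced from the real line, and let λ be a positive rational number. If there exists a correspondence R between X_q and X_q with sup { |d(x,x') − λ·d(y,y')| : (x,y), (x',y') ∈ R } < ∞ (i.e., λ·X_q lies at finite Gromov–Hausdorff distance from X_q), then there exist an integer α, a positive integer d, and coprime positive integers r₁ and r₂ such that λ = q^α · (q^{r₂·d} − 1) / (q^{r₁·d} − 1). -/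
open ENNReal

private lemma gap_aux {Q : ℝ} (hQ : 2 ≤ Q) {j k : ℤ} (hjk : j < k) : Q^j ≤ Q^k - Q^j := by
  have h1 : (1:ℝ) ≤ Q := le_trans one_le_two hQ
  have h0 : (0:ℝ) < Q := by linarith
  have h3 : Q^(j+1) ≤ Q^k := zpow_le_zpow_right₀ h1 (by omega)
  have h2 : Q^j * Q = Q^(j+1) := by rw [zpow_add_one₀ (ne_of_gt h0)]
  nlinarith [zpow_pos h0 j]

/-- Proposition 5.6: for an integer `q ≥ 2`, `X_q = {q^n : n ∈ ℤ} ⊆ ℝ`, and a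
positive rational `λ`, if some correspondence `R` between `X_q` and `X_q` has
`sup { |d(x,x') − λ·d(y,y')| } < ∞` (i.e., `λX_q` stays in the cloud of `X_q`),
then `λ = q^α (q^{r₂d} − 1)/(q^{r₁d} − 1)` for some integer `α`, positive integer
`d` and coprime positive integers `r₁`, `r₂`. -/
theorem rational_stabilizer_of_geometric (q : ℕ) (hq : 2 ≤ q)
    (Xs : Set ℝ) (hXs : Xs = {x : ℝ | ∃ n : ℤ, x = (q : ℝ) ^ n})
    (lam : ℚ) (hlam : 0 < lam)
    (hfin : ∃ R : Set (Xs × Xs), IsCorrespondence R ∧ disScaled (lam : ℝ) R < ⊤) :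
    ∃ (α : ℤ) (d r₁ r₂ : ℕ), 0 < d ∧ 0 < r₁ ∧ 0 < r₂ ∧ Nat.Coprime r₁ r₂ ∧
      (lam : ℝ) =
        (q : ℝ) ^ α * ((q : ℝ) ^ (r₂ * d) - 1) / ((q : ℝ) ^ (r₁ * d) - 1) := by
  classical
  obtain ⟨R, ⟨hR1, hR2⟩, hlt⟩ := hfin
  set l : ℝ := (lam : ℝ) with hl
  have hlpos : 0 < l := by rw [hl]; exact_mod_cast hlam
  have hq2 : (2:ℝ) ≤ (q:ℝ) := by exact_mod_cast hq
  have hq1 : (1:ℝ) < (q:ℝ) := by linarith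
  have hq0 : (0:ℝ) < (q:ℝ) := by linarith
  set C : ℝ := (disScaled l R).toReal with hC
  have key : ∀ p r : ↥Xs × ↥Xs, p ∈ R → r ∈ R →
      |dist p.1 r.1 - l * dist p.2 r.2| ≤ C := by
    intro p r hp hr
    have h1 : ENNReal.ofReal |dist p.1 r.1 - l * dist p.2 r.2| ≤
        ⨆ p ∈ R, ⨆ r ∈ R, ENNReal.ofReal |dist p.1 r.1 - l * dist p.2 r.2| :=
      le_trans
        (le_biSup (fun r : ↥Xs × ↥Xs => ENNReal.ofReal |dist p.1 r.1 - l * dist p.2 r.2|) hr)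
        (le_biSup (fun p : ↥Xs × ↥Xs =>
          ⨆ r ∈ R, ENNReal.ofReal |dist p.1 r.1 - l * dist p.2 r.2|) hp)
    have h1' : ENNReal.ofReal |dist p.1 r.1 - l * dist p.2 r.2| ≤ disScaled l R := h1
    have h2 := ENNReal.toReal_mono (ne_of_lt hlt) h1'
    rwa [ENNReal.toReal_ofReal (abs_nonneg _)] at h2
  have hmem : ∀ m : ℤ, (q:ℝ)^m ∈ Xs := by
    intro m; rw [hXs]; exact ⟨m, rfl⟩
  set Y : ℤ → ↥Xs := fun m => ⟨(q:ℝ)^m, hmem m⟩ with hY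
  have hex : ∀ m : ℤ, ∃ x : ↥Xs, (x, Y m) ∈ R := fun m => hR2 (Y m)
  choose f hf using hex
  have hfe : ∀ m : ℤ, ∃ nn : ℤ, ((f m : ↥Xs) : ℝ) = (q:ℝ)^nn := by
    intro m
    have h2 : ((f m : ↥Xs) : ℝ) ∈ Xs := (f m).2
    revert h2
    generalize ((f m : ↥Xs) : ℝ) = x
    intro h2
    rw [hXs] at h2
    exact h2
  choose n hn using hfe
  -- main distance bound
  have hb : ∀ m m' : ℤ,
      abs (|(q:ℝ)^(n m) - (q:ℝ)^(n m')| - l * |(q:ℝ)^m - (q:ℝ)^m'|) ≤ C := by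
    intro m m'
    have h := key (f m, Y m) (f m', Y m') (hf m) (hf m')
    simp only [Subtype.dist_eq, Real.dist_eq] at h
    rwa [hn m, hn m'] at h
  set c0 : ℝ := (q:ℝ)^(n 0) with hc0
  have hc0pos : 0 < c0 := zpow_pos hq0 _
  set B : ℝ := C + |c0 - l| with hB
  have hCnn : 0 ≤ C := ENNReal.toReal_nonneg
  -- step: for m with l*(q^m - 1) > c0 + C, we get |q^(n m) - l*q^m| ≤ B
  have hstep : ∀ m : ℤ, c0 + C < l * ((q:ℝ)^m - 1) →
      |(q:ℝ)^(n m) - l * (q:ℝ)^m| ≤ B := by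
    intro m hcond
    have h := hb m 0
    have hm1 : (1:ℝ) ≤ (q:ℝ)^m := by
      by_contra hcon
      push_neg at hcon
      have : l * ((q:ℝ)^m - 1) ≤ 0 := by
        apply mul_nonpos_of_nonneg_of_nonpos (le_of_lt hlpos); linarith
      linarith
    rw [zpow_zero] at h
    rw [show |(q:ℝ)^m - 1| = (q:ℝ)^m - 1 by rw [abs_of_nonneg]; linarith] at h
    set u : ℝ := (q:ℝ)^(n m) with hu
    have hupos : 0 < u := zpow_pos hq0 _
    have habs := abs_le.mp h
    have hularge : c0 < u := by
      by_contra hcon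
      push_neg at hcon
      have heq2 : |u - c0| = c0 - u := by rw [abs_sub_comm, abs_of_nonneg]; linarith
      rw [heq2] at habs
      linarith [habs.1]
    have heq3 : |u - c0| = u - c0 := abs_of_nonneg (by linarith)
    rw [heq3] at habs
    have h1 : u - l * (q:ℝ)^m = (u - c0 - l * ((q:ℝ)^m - 1)) + (c0 - l) := by ring
    calc |u - l * (q:ℝ)^m| ≤ |u - c0 - l * ((q:ℝ)^m - 1)| + |c0 - l| := by
          rw [h1]; exact abs_add_le _ _
      _ ≤ C + |c0 - l| := by
          have : |u - c0 - l * ((q:ℝ)^m - 1)| ≤ C := abs_le.mpr ⟨by linarith, by linarith⟩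
          linarith
  -- rescaled bound: |q^(n m - m) - l| ≤ B / q^m
  have hdiv : ∀ m : ℤ, c0 + C < l * ((q:ℝ)^m - 1) →
      |(q:ℝ)^(n m - m) - l| ≤ B / (q:ℝ)^m := by
    intro m hcond
    have hqm : (0:ℝ) < (q:ℝ)^m := zpow_pos hq0 _
    have h := hstep m hcond
    have heq : (q:ℝ)^(n m - m) - l = ((q:ℝ)^(n m) - l * (q:ℝ)^m) / (q:ℝ)^m := by
      rw [zpow_sub₀ (ne_of_gt hq0)]
      field_simp
    rw [heq, abs_div, abs_of_pos hqm]
    gcongr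
  -- choose big threshold N
  obtain ⟨N, hN⟩ := pow_unbounded_of_one_lt
    (max ((c0 + C) / l + 1) (4 * (B + 1) / l)) hq1
  have hNb : ∀ m : ℤ, (N:ℤ) ≤ m →
      max ((c0 + C) / l + 1) (4 * (B + 1) / l) < (q:ℝ)^m := by
    intro m hm
    refine lt_of_lt_of_le ?_ (zpow_le_zpow_right₀ (le_of_lt hq1) hm)
    rw [zpow_natCast]; exact hN
  have hcond : ∀ m : ℤ, (N:ℤ) ≤ m → c0 + C < l * ((q:ℝ)^m - 1) := by
    intro m hm
    have h1 := lt_of_le_of_lt (le_max_left _ _) (hNb m hm)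
    have h2 : (c0 + C) / l < (q:ℝ)^m - 1 := by linarith
    calc c0 + C = l * ((c0 + C)/l) := by field_simp
      _ < l * ((q:ℝ)^m - 1) := mul_lt_mul_of_pos_left h2 hlpos
  have hBnn : 0 ≤ B := by positivity
  have hsmall : ∀ m : ℤ, (N:ℤ) ≤ m → |(q:ℝ)^(n m - m) - l| < l / 4 := by
    intro m hm
    have h1 := hdiv m (hcond m hm)
    have h2 := lt_of_le_of_lt (le_max_right _ _) (hNb m hm)
    have hqm : (0:ℝ) < (q:ℝ)^m := zpow_pos hq0 _
    have h3 : B / (q:ℝ)^m < l / 4 := by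
      rw [div_lt_div_iff₀ hqm (by norm_num : (0:ℝ) < 4)]
      have h4 : 4 * (B + 1) < l * (q:ℝ)^m := by
        rw [div_lt_iff₀ hlpos] at h2; linarith [h2]
      nlinarith
    linarith [h1]
  -- all n m - m are equal for m ≥ N
  set α : ℤ := n N - N with hα
  have hconst : ∀ m : ℤ, (N:ℤ) ≤ m → n m - m = α := by
    intro m hm
    by_contra hne
    have h1 := hsmall m hm
    have h2 := hsmall N le_rfl
    have hlow : ∀ j : ℤ, |(q:ℝ)^j - l| < l/4 → l/2 < (q:ℝ)^j := by
      intro j hj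
      have := abs_lt.mp hj
      linarith [this.1]
    rcases lt_or_gt_of_ne hne with hlt' | hgt'
    · have hg := gap_aux hq2 hlt'
      have h3 := hlow _ h1
      have ha1 := abs_lt.mp h1
      have ha2 := abs_lt.mp h2
      linarith
    · have hg := gap_aux hq2 hgt'
      have h3 := hlow _ h2
      have ha1 := abs_lt.mp h1
      have ha2 := abs_lt.mp h2
      linarith
  -- conclude l = q^α
  have hfinal : l = (q:ℝ)^α := by
    by_contra hne
    set ε : ℝ := |(q:ℝ)^α - l| with hε
    have hεpos : 0 < ε := by
      rw [hε, abs_pos, sub_ne_zero]; exact fun h => hne h.symm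
    obtain ⟨N₂, hN₂⟩ := pow_unbounded_of_one_lt ((B + 1) / ε) hq1
    set m : ℤ := (N:ℤ) + (N₂:ℤ) with hm
    have hmN : (N:ℤ) ≤ m := by simp [hm]
    have h1 := hdiv m (hcond m hmN)
    rw [hconst m hmN] at h1
    have hq2m : (q:ℝ)^(N₂:ℤ) ≤ (q:ℝ)^m :=
      zpow_le_zpow_right₀ (le_of_lt hq1) (by omega)
    have hqm : (0:ℝ) < (q:ℝ)^m := zpow_pos hq0 _
    have hN₂' : (B + 1) / ε < (q:ℝ)^m := by
      refine lt_of_lt_of_le ?_ hq2m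
      rw [zpow_natCast]; exact hN₂
    have hlt2 : B / (q:ℝ)^m < ε := by
      rw [div_lt_iff₀ hqm]
      rw [div_lt_iff₀ hεpos] at hN₂'
      nlinarith
    linarith [h1]
  refine ⟨α, 1, 1, 1, one_pos, one_pos, one_pos, Nat.coprime_one_left 1, ?_⟩
  have hpow : ((q:ℝ))^(1*1 : ℕ) = (q:ℝ) := by norm_num
  rw [hfinal, hpow, mul_div_assoc, div_self (sub_ne_zero.mpr (ne_of_gt hq1)), mul_one]
end

section
/- Let φ : ℕ → ℝ be a monotonically increasing function with φ(n) ≥ n for all n ≥ 1 and such that φ(n+1) − φ(n) → ∞ as n → ∞. Let q > 1 and λ > 0 be real numbers, and set X_φ = { q^{φ(n)} : n ∈ ℕ, n ≥ 1 } ⊆ ℝ with the metric induced from the real line. Then there exists a correspondence R between X_φ and X_φ with sup { |d(x,x') − λ·d(y,y')| : (x,y), (x',y') ∈ R } < ∞ (i.e., λ·X_φ lies at finite Gromov–Hausdorff distance from X_φ) if and only if λ = 1. In particular, for every λ ≠ 1, every correspondence R between X_φ and X_φ satisfies sup { |d(x,x') − λ·d(y,y')| : (x,y), (x',y') ∈ R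 } = ∞. -/
open ENNReal

set_option maxHeartbeats 1000000 in
/-- Theorem 5.8: let `φ : ℕ → ℝ` be increasing with `φ(n) ≥ n` for `n ≥ 1` and
`φ(n+1) − φ(n) → ∞`, and let `q > 1`, `λ > 0` be reals. For
`X_φ = {q^{φ(n)} : n ≥ 1} ⊆ ℝ`, some correspondence `R` between `X_φ` and `X_φ`
has `sup { |d(x,x') − λ·d(y,y')| } < ∞` iff `λ = 1`; in particular, for `λ ≠ 1`
every correspondence has infinite such supremum. -/
theorem stabilizer_trivial_of_gaps_tendsto_top (φ : ℕ → ℝ) (hmono : StrictMono φ)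
    (hge : ∀ n : ℕ, 1 ≤ n → (n : ℝ) ≤ φ n)
    (hgap : Filter.Tendsto (fun n => φ (n + 1) - φ n) Filter.atTop Filter.atTop)
    (q lam : ℝ) (hq : 1 < q) (hlam : 0 < lam)
    (Xs : Set ℝ) (hXs : Xs = {x : ℝ | ∃ n : ℕ, 1 ≤ n ∧ x = q ^ φ n}) :
    ((∃ R : Set (Xs × Xs), IsCorrespondence R ∧ disScaled lam R < ⊤) ↔ lam = 1) ∧
      (lam ≠ 1 → ∀ R : Set (Xs × Xs), IsCorrespondence R → disScaled lam R = ⊤) := by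
  subst hXs
  have hq0 : (0 : ℝ) < q := lt_trans zero_lt_one hq
  have hmemX : ∀ n : ℕ, 1 ≤ n → q ^ φ n ∈ {x : ℝ | ∃ n : ℕ, 1 ≤ n ∧ x = q ^ φ n} :=
    fun n hn => ⟨n, hn, rfl⟩
  have hposX : ∀ x ∈ {x : ℝ | ∃ n : ℕ, 1 ≤ n ∧ x = q ^ φ n}, (0 : ℝ) < x := by
    rintro x ⟨m, hm, rfl⟩
    exact Real.rpow_pos_of_pos hq0 _
  have hposk : ∀ k : ℕ, (0 : ℝ) < q ^ φ k := fun k => Real.rpow_pos_of_pos hq0 _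
  have hmono' : ∀ k l : ℕ, k ≤ l → q ^ φ k ≤ q ^ φ l := fun k l h =>
    (Real.rpow_le_rpow_left_iff hq).mpr (hmono.monotone h)
  -- the main claim
  have main : lam ≠ 1 → ∀ R : Set (({x : ℝ | ∃ n : ℕ, 1 ≤ n ∧ x = q ^ φ n} : Set ℝ) ×
      ({x : ℝ | ∃ n : ℕ, 1 ≤ n ∧ x = q ^ φ n} : Set ℝ)),
      IsCorrespondence R → disScaled lam R = ⊤ := by
    intro hne R hR
    by_contra htop
    set C := (disScaled lam R).toReal with hC
    have hkey : ∀ p ∈ R, ∀ r ∈ R, |dist p.1 r.1 - lam * dist p.2 r.2| ≤ C := by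
      intro p hp r hr
      have h1 : ENNReal.ofReal |dist p.1 r.1 - lam * dist p.2 r.2| ≤ disScaled lam R := by
        refine le_trans ?_ (le_iSup₂ (f := fun p' (_ : p' ∈ R) =>
          ⨆ r' ∈ R, ENNReal.ofReal |dist p'.1 r'.1 - lam * dist p'.2 r'.2|) p hp)
        exact le_iSup₂ (f := fun r' (_ : r' ∈ R) =>
          ENNReal.ofReal |dist p.1 r'.1 - lam * dist p.2 r'.2|) r hr
      have h2 := ENNReal.toReal_mono htop h1
      rwa [ENNReal.toReal_ofReal (abs_nonneg _)] at h2
    set x0 : ({x : ℝ | ∃ n : ℕ, 1 ≤ n ∧ x = q ^ φ n} : Set ℝ) := ⟨q ^ φ 1, hmemX 1 le_rfl⟩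
      with hx0
    obtain ⟨y0, hy0⟩ := hR.1 x0
    have hb0 : (0 : ℝ) < y0.val := hposX _ y0.property
    set K := (C + q ^ φ 1 + lam * y0.val) / lam with hK
    -- Claim A
    have claimA : ∀ n : ℕ, 1 ≤ n → ∃ m : ℕ, 1 ≤ m ∧ |q ^ φ m - q ^ φ n / lam| ≤ K := by
      intro n hn
      obtain ⟨y, hy⟩ := hR.1 ⟨q ^ φ n, hmemX n hn⟩
      obtain ⟨m, hm, hym⟩ := y.property
      refine ⟨m, hm, ?_⟩
      have hkey' := hkey _ hy _ hy0
      simp only [Subtype.dist_eq, Real.dist_eq] at hkey'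
      have hb : (0 : ℝ) < y.val := hposX _ y.property
      set a : ℝ := q ^ φ n with ha
      set a0 : ℝ := q ^ φ 1 with ha0
      set b : ℝ := y.val with hb'
      set b0 : ℝ := y0.val with hb0'
      have hapos : (0 : ℝ) < a := hposk n
      have ha0pos : (0 : ℝ) < a0 := hposk 1
      have key : |lam * b - a| ≤ C + a0 + lam * b0 := by
        rcases abs_cases (a - a0) with ⟨e1, f1⟩ | ⟨e1, f1⟩ <;>
          rcases abs_cases (b - b0) with ⟨e2, f2⟩ | ⟨e2, f2⟩ <;>
          rw [e1, e2] at hkey' <;> rw [abs_le] at hkey' ⊢ <;>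
          constructor <;>
          nlinarith [hkey'.1, hkey'.2, mul_pos hlam hb0, mul_pos hlam hb, hapos, ha0pos,
            f1, f2, hlam]
      have heq : b - a / lam = (lam * b - a) / lam := by
        rw [eq_div_iff hlam.ne', mul_comm lam b]
        field_simp
      rw [← hym, heq, abs_div, abs_of_pos hlam, hK]
      gcongr
    -- Claim B : derive a contradiction
    have hinv : (1 : ℝ) / lam ≠ 1 := by
      intro h
      rw [div_eq_one_iff_eq hlam.ne'] at h
      exact hne h.symm
    obtain ⟨δ, hδdef⟩ : ∃ δ : ℝ, δ = |1 - 1 / lam| := ⟨_, rfl⟩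
    have hδ : (0 : ℝ) < δ := hδdef ▸ abs_pos.mpr (sub_ne_zero.mpr (Ne.symm hinv))
    obtain ⟨c, hc⟩ : ∃ c : ℝ, c = max lam (1 / lam) := ⟨_, rfl⟩
    have hcpos : (0 : ℝ) < c := hc ▸ lt_of_lt_of_le hlam (le_max_left _ _)
    obtain ⟨G, hGdef⟩ : ∃ G : ℝ, G = Real.logb q (2 * c) := ⟨_, rfl⟩
    have hG : q ^ G = 2 * c := by
      rw [hGdef]; exact Real.rpow_logb hq0 (ne_of_gt hq) (by positivity)
    obtain ⟨N₁, hN₁⟩ := Filter.eventually_atTop.mp (hgap.eventually_ge_atTop G)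
    obtain ⟨B, hB⟩ : ∃ B : ℝ, B = max (K / δ) (max K (lam * K)) + 1 := ⟨_, rfl⟩
    obtain ⟨N₂, hN₂⟩ := Filter.eventually_atTop.mp
      ((tendsto_pow_atTop_atTop_of_one_lt hq).eventually_ge_atTop B)
    set n' : ℕ := N₁ + N₂ + 1 with hn'
    obtain ⟨m, hm1, hm2⟩ := claimA (n' + 1) (by omega)
    have hstep : ∀ k : ℕ, N₁ ≤ k → 2 * c * q ^ φ k ≤ q ^ φ (k + 1) := by
      intro k hk
      have h1 : q ^ φ (k + 1) = q ^ φ k * q ^ (φ (k + 1) - φ k) := by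
        rw [← Real.rpow_add hq0]; ring_nf
      have h2 : 2 * c ≤ q ^ (φ (k + 1) - φ k) := by
        rw [← hG]
        exact (Real.rpow_le_rpow_left_iff hq).mpr (hN₁ k hk)
      calc 2 * c * q ^ φ k = q ^ φ k * (2 * c) := by ring
        _ ≤ q ^ φ k * q ^ (φ (k + 1) - φ k) :=
            mul_le_mul_of_nonneg_left h2 (hposk k).le
        _ = q ^ φ (k + 1) := h1.symm
    have hBn' : B ≤ q ^ φ n' := by
      calc B ≤ q ^ n' := hN₂ n' (by omega)
        _ = q ^ ((n' : ℕ) : ℝ) := (Real.rpow_natCast q n').symm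
        _ ≤ q ^ φ n' := (Real.rpow_le_rpow_left_iff hq).mpr (hge n' (by omega))
    have haB : B ≤ q ^ φ (n' + 1) := hBn'.trans (hmono' n' (n' + 1) (by omega))
    have hKδ : K / δ + 1 ≤ B := by
      rw [hB]; have := le_max_left (K / δ) (max K (lam * K)); linarith
    have hKB : K + 1 ≤ B := by
      rw [hB]
      have h1 := le_max_left K (lam * K)
      have h2 := le_max_right (K / δ) (max K (lam * K)); linarith
    have hlKB : lam * K + 1 ≤ B := by
      rw [hB]
      have h1 := le_max_right K (lam * K)
      have h2 := le_max_right (K / δ) (max K (lam * K)); linarith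
    rcases (by omega : m ≤ n' ∨ m = n' + 1 ∨ n' + 2 ≤ m) with hcase | hcase | hcase
    · -- m ≤ n'
      have h1 : q ^ φ m ≤ q ^ φ n' := hmono' _ _ hcase
      have h2 : 2 * c * q ^ φ n' ≤ q ^ φ (n' + 1) := hstep n' (by omega)
      have h3 : lam ≤ c := hc ▸ le_max_left _ _
      have hc' : 2 * lam * q ^ φ n' ≤ q ^ φ (n' + 1) := by nlinarith [hposk n']
      have h4 : 2 * q ^ φ n' ≤ q ^ φ (n' + 1) / lam := by
        rw [le_div_iff₀ hlam]; nlinarith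
      have h5 := (abs_le.mp hm2).1
      linarith
    · -- m = n' + 1
      rw [hcase] at hm2
      have heq : q ^ φ (n' + 1) - q ^ φ (n' + 1) / lam = q ^ φ (n' + 1) * (1 - 1 / lam) := by
        ring
      rw [heq, abs_mul, abs_of_pos (hposk (n' + 1)), ← hδdef] at hm2
      have h1 : K / δ < q ^ φ (n' + 1) := by linarith
      have h2 : K < q ^ φ (n' + 1) * δ := (div_lt_iff₀ hδ).mp h1
      linarith
    · -- n' + 2 ≤ m
      have h1 : q ^ φ (n' + 2) ≤ q ^ φ m := hmono' _ _ hcase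
      have h2 : 2 * c * q ^ φ (n' + 1) ≤ q ^ φ (n' + 1 + 1) := hstep (n' + 1) (by omega)
      have h3 : 1 / lam ≤ c := hc ▸ le_max_right _ _
      have hca : 2 * (1 / lam) * q ^ φ (n' + 1) ≤ 2 * c * q ^ φ (n' + 1) := by
        nlinarith [hposk (n' + 1)]
      have h5 := (abs_le.mp hm2).2
      have h7 : 2 * (1 / lam) * q ^ φ (n' + 1) = 2 * (q ^ φ (n' + 1) / lam) := by ring
      have h6 : q ^ φ (n' + 1) / lam ≤ K := by
        have h8 : (n' + 2 : ℕ) = n' + 1 + 1 := by omega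
        rw [h8] at h1
        linarith
      have h9 : q ^ φ (n' + 1) ≤ lam * K := by
        rw [div_le_iff₀ hlam] at h6; linarith
      linarith
  refine ⟨⟨?_, ?_⟩, main⟩
  · rintro ⟨R, hR, hfin⟩
    by_contra hne
    rw [main hne R hR] at hfin
    exact absurd hfin (lt_irrefl ⊤)
  · rintro rfl
    refine ⟨{p | p.1 = p.2}, ⟨fun x => ⟨x, rfl⟩, fun y => ⟨y, rfl⟩⟩, ?_⟩
    refine lt_of_le_of_lt (iSup₂_le fun p hp => iSup₂_le fun r hr => ?_)
      (by simp : (0 : ℝ≥0∞) < ⊤)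
    simp only [Set.mem_setOf_eq] at hp hr
    rw [hp, hr]
    simp
end

section
/- Let q > 1 and λ > 0 be real numbers and set X = { q^{n²} : n ∈ ℕ, n ≥ 1 } ⊆ ℝ with the metric induced from the real line. Then there exists a correspondence R between X and X with sup { |d(x,x') − λ·d(y,y')| : (x,y), (x',y') ∈ R } < ∞ (i.e., λ·X lies at finite Gromov–Hausdorff distance from X) if and only if λ = 1. -/
open ENNReal

private lemma pow_big (q : ℝ) (hq : 1 < q) (T : ℝ) : ∃ N : ℕ, ∀ n, N ≤ n → T ≤ q ^ n := by
  obtain ⟨N, hN⟩ := pow_unbounded_of_one_lt T hq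
  exact ⟨N, fun n hn => hN.le.trans (pow_le_pow_right₀ hq.le hn)⟩

set_option maxHeartbeats 2000000 in
private lemma key_lemma_s14 (q lam C : ℝ) (hq : 1 < q) (hlam : 0 < lam) (hC : 0 ≤ C)
    (H : ∀ n : ℕ, ∃ M J : ℕ, 1 ≤ J ∧ J ≤ M ∧
      |q ^ (M^2) - q ^ (J^2) - lam * (q ^ ((n+1)^2) - q)| ≤ C) :
    lam = 1 := by
  by_contra hne
  have hq0 : (0:ℝ) < q := lt_trans one_pos hq
  choose m j hj1 hjm hb using H
  set ε : ℝ := (q-1)/(2*(q+1)) with hεdef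
  have hε0 : 0 < ε := div_pos (by linarith) (by linarith)
  have hε2 : ε ≤ 1/2 := by
    rw [hεdef, div_le_div_iff₀ (by linarith) (by norm_num)]; linarith
  -- choose K with (q^(2K-1))⁻¹ ≤ ε/2
  obtain ⟨K₀, hK₀⟩ := pow_big q hq (2/ε)
  set K := K₀ + 2 with hKdef
  have hKinv : (q ^ (2*K-1))⁻¹ ≤ ε/2 := by
    have h1 : 2/ε ≤ q^(2*K-1) := hK₀ _ (by omega)
    calc (q^(2*K-1))⁻¹ ≤ (2/ε)⁻¹ := by
          apply inv_anti₀ (by positivity) h1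
      _ = ε/2 := by rw [inv_div]
  set B : ℝ := q^(K^2) + 5*C + 5*lam*q + 5 with hBdef
  obtain ⟨N, hN⟩ := pow_big q hq (B/(lam*ε))
  have hgoodA : ∀ n, N ≤ n → B ≤ lam * ε * q^((n+1)^2) := by
    intro n hn
    have h1 : B/(lam*ε) ≤ q^n := hN n hn
    have h2 : (q:ℝ)^n ≤ q^((n+1)^2) := pow_le_pow_right₀ hq.le (by nlinarith)
    have h3 := le_trans h1 h2
    rw [div_le_iff₀ (by positivity)] at h3
    linarith [mul_comm (q^((n+1)^2)) (lam*ε)]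
  -- main per-n facts
  have main : ∀ n, N ≤ n → j n < m n ∧ K ≤ m n ∧
      lam * q^((n+1)^2) * (1-ε) ≤ q^((m n)^2) ∧
      q^((m n)^2) ≤ lam * q^((n+1)^2) * (1+ε) := by
    intro n hn
    set A := (q:ℝ)^((n+1)^2) with hA
    have hA0 : (0:ℝ) < A := pow_pos hq0 _
    have hgood : B ≤ lam * ε * A := hgoodA n hn
    have hAq : q ≤ A := by
      calc q = q^1 := (pow_one q).symm
        _ ≤ A := pow_le_pow_right₀ hq.le (by nlinarith)
    have hKpos : (0:ℝ) < q^(K^2) := pow_pos hq0 _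
    have hlamq : (0:ℝ) < lam * q := mul_pos hlam hq0
    have hlamA : lam * ε * A ≤ lam * A := by nlinarith
    have habs := abs_le.mp (hb n)
    have hJpos : (0:ℝ) < q^((j n)^2) := pow_pos hq0 _
    have hMpos : (0:ℝ) < q^((m n)^2) := pow_pos hq0 _
    have hMJ : (q:ℝ)^((j n)^2) ≤ q^((m n)^2) :=
      pow_le_pow_right₀ hq.le (Nat.pow_le_pow_left (hjm n) 2)
    have hms : lam * (A - q) = lam*A - lam*q := by ring
    have hslarge : C < lam*(A-q) := by nlinarith
    have haJM : j n < m n := by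
      rcases lt_or_eq_of_le (hjm n) with h | h
      · exact h
      · exfalso; rw [h] at habs; nlinarith [habs.1]
    have hMK : K ≤ m n := by
      have h1 : (q:ℝ)^(K^2) ≤ q^((m n)^2) := by nlinarith [habs.1]
      have h2 := (pow_le_pow_iff_right₀ hq).mp h1
      exact (Nat.pow_le_pow_iff_left (by norm_num)).mp h2
    have hlow : lam * A * (1-ε) ≤ q^((m n)^2) := by nlinarith [habs.1]
    -- upper bound
    obtain ⟨M', hM'⟩ : ∃ M', m n = M' + 1 := ⟨m n - 1, by omega⟩
    have hsplit : (q:ℝ)^(M'^2) * q^(2*M'+1) = q^((m n)^2) := by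
      rw [← pow_add]; congr 1; rw [hM']; ring
    have hJle : (q:ℝ)^((j n)^2) ≤ q^(M'^2) :=
      pow_le_pow_right₀ hq.le (Nat.pow_le_pow_left (by omega) 2)
    have hinvM : (q^(2*M'+1))⁻¹ ≤ ε/2 := by
      refine le_trans ?_ hKinv
      apply inv_anti₀ (pow_pos hq0 _)
      exact pow_le_pow_right₀ hq.le (by omega)
    have h2M : (0:ℝ) < q^(2*M'+1) := pow_pos hq0 _
    have hM'eq : (q:ℝ)^(M'^2) = q^((m n)^2) * (q^(2*M'+1))⁻¹ := by
      field_simp [← hsplit]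
      exact hsplit
    have hM'le : (q:ℝ)^(M'^2) ≤ q^((m n)^2) * (ε/2) := by
      rw [hM'eq]; exact mul_le_mul_of_nonneg_left hinvM hMpos.le
    have hup1 : q^((m n)^2) * (1 - ε/2) ≤ lam*A + C := by
      have hx : q^((m n)^2) * (1 - ε/2) = q^((m n)^2) - q^((m n)^2) * (ε/2) := by ring
      linarith [habs.2, hM'le, hJle, hms, hlamq]
    have hCsmall : 4*C ≤ lam*ε*A := by linarith [hgood, hKpos, hlamq, hC]
    have e2 : lam*A*(1+ε/4) ≤ lam*A*(1+ε)*(1-ε/2) := by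
      have h := mul_nonneg (mul_pos hlam hA0).le
        (show (0:ℝ) ≤ ε/4 - ε*(ε/2) by nlinarith)
      nlinarith [h]
    have e1 : q^((m n)^2) * (1-ε/2) ≤ lam*A*(1+ε/4) := by nlinarith
    have hupper : q^((m n)^2) ≤ lam*A*(1+ε) :=
      le_of_mul_le_mul_right (by linarith : q^((m n)^2)*(1-ε/2) ≤ lam*A*(1+ε)*(1-ε/2))
        (by linarith : (0:ℝ) < 1-ε/2)
    exact ⟨haJM, hMK, hlow, hupper⟩
  have hqne : (q:ℝ) ≠ 0 := ne_of_gt hq0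
  have exple : ∀ n, N ≤ n → ∀ n', N ≤ n' →
      (((m n)^2 : ℕ) : ℤ) - (((n+1)^2 : ℕ) : ℤ) ≤ (((m n')^2 : ℕ) : ℤ) - (((n'+1)^2 : ℕ) : ℤ) := by
    intro n hn n' hn'
    obtain ⟨-, -, hlo, hhi⟩ := main n hn
    obtain ⟨-, -, hlo', hhi'⟩ := main n' hn'
    set u : ℤ := (((m n)^2 : ℕ) : ℤ) - (((n+1)^2 : ℕ) : ℤ) with hu
    set v : ℤ := (((m n')^2 : ℕ) : ℤ) - (((n'+1)^2 : ℕ) : ℤ) with hv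
    have hA0 : (0:ℝ) < q^((n+1)^2) := pow_pos hq0 _
    have hA0' : (0:ℝ) < q^((n'+1)^2) := pow_pos hq0 _
    have hzu : (q:ℝ)^u = q^((m n)^2) / q^((n+1)^2) := by
      rw [hu, zpow_sub₀ hqne, zpow_natCast, zpow_natCast]
    have hzv : (q:ℝ)^v = q^((m n')^2) / q^((n'+1)^2) := by
      rw [hv, zpow_sub₀ hqne, zpow_natCast, zpow_natCast]
    have hu2 : (q:ℝ)^u ≤ lam*(1+ε) := by
      rw [hzu, div_le_iff₀ hA0]; nlinarith [hhi]
    have hv1 : lam*(1-ε) ≤ (q:ℝ)^v := by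
      rw [hzv, le_div_iff₀ hA0']; nlinarith [hlo']
    have h1 : 1+ε < q*(1-ε) := by
      have hεq : ε*(q+1) = (q-1)/2 := by rw [hεdef]; field_simp
      nlinarith [hεq]
    have hlt : (q:ℝ)^u < q^(v+1) := by
      have c1 : lam*(1+ε) < q*(lam*(1-ε)) := by nlinarith [h1, hlam]
      have c2 : q*(lam*(1-ε)) ≤ q*(q:ℝ)^v := by nlinarith [hv1, hq0]
      have c3 : (q:ℝ)^(v+1) = q^v * q := zpow_add_one₀ hqne v
      calc (q:ℝ)^u ≤ lam*(1+ε) := hu2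
        _ < q * (q:ℝ)^v := lt_of_lt_of_le c1 c2
        _ = q^(v+1) := by rw [c3]; ring
    have := (zpow_lt_zpow_iff_right₀ hq).mp hlt
    omega
  have hδ : 0 < |1-lam| := abs_pos.mpr (sub_ne_zero.mpr (fun h => hne h.symm))
  obtain ⟨N₂, hN₂⟩ := pow_big q hq (2/|1-lam|)
  obtain ⟨N₃, hN₃⟩ := pow_big q hq ((C + lam*q + 1)/(|1-lam|/2))
  set k : ℤ := (((m N)^2 : ℕ) : ℤ) - (((N+1)^2 : ℕ) : ℤ) with hk
  set n := N + k.natAbs + N₂ + N₃ with hn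
  have hnN : N ≤ n := by omega
  have hkn : (((m n)^2:ℕ):ℤ) - (((n+1)^2:ℕ):ℤ) = k :=
    le_antisymm (exple n hnN N le_rfl) (exple N le_rfl n hnN)
  have hmn : m n = n + 1 := by
    by_contra hne2
    have h1 : 1 ≤ m n := le_trans (hj1 n) (hjm n)
    have h3 : (1:ℤ) ≤ |(m n : ℤ) - ((n:ℤ)+1)| := Int.one_le_abs (by omega)
    have h4 : ((n:ℤ) + 2) ≤ |(m n : ℤ) + ((n:ℤ)+1)| := by
      rw [abs_of_nonneg (by omega : (0:ℤ) ≤ (m n : ℤ) + ((n:ℤ)+1))]; omega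
    have h5 : ((n:ℤ)+2) ≤ |k| := by
      rw [← hkn]
      have e : ((((m n)^2 : ℕ)):ℤ) - (((n+1)^2 : ℕ):ℤ)
          = ((m n : ℤ) - ((n:ℤ)+1)) * ((m n:ℤ) + ((n:ℤ)+1)) := by push_cast; ring
      rw [e, abs_mul]
      calc ((n:ℤ)+2) ≤ |(m n:ℤ)+((n:ℤ)+1)| := h4
        _ ≤ |(m n:ℤ)-((n:ℤ)+1)| * |(m n:ℤ)+((n:ℤ)+1)| :=
          le_mul_of_one_le_left (abs_nonneg _) h3
    rw [Int.abs_eq_natAbs] at h5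
    omega
  have hbn := hb n
  rw [hmn] at hbn
  have hjn : j n ≤ n := by have := (main n hnN).1; omega
  set A := (q:ℝ)^((n+1)^2) with hA
  have hA0 : (0:ℝ) < A := pow_pos hq0 _
  have habs := abs_le.mp hbn
  have hJ2 : (q:ℝ)^((j n)^2) ≤ q^(n^2) := pow_le_pow_right₀ hq.le (Nat.pow_le_pow_left hjn 2)
  have hJpos : (0:ℝ) < q^((j n)^2) := pow_pos hq0 _
  have hsplit : (q:ℝ)^(n^2) * q^(2*n+1) = A := by rw [hA, ← pow_add]; congr 1; ring
  have h2n : (0:ℝ) < q^(2*n+1) := pow_pos hq0 _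
  have hN₂' : 2/|1-lam| ≤ q^(2*n+1) := hN₂ _ (by omega)
  have h7 : 2 ≤ |1-lam| * q^(2*n+1) := by
    rw [div_le_iff₀ hδ] at hN₂'
    linarith [mul_comm (q^(2*n+1)) |1-lam|]
  have hq2n : (q:ℝ)^(n^2) ≤ |1-lam|/2 * A := by
    rw [← hsplit]
    have h8 : (0:ℝ) ≤ q^(n^2) * (|1-lam| * q^(2*n+1) - 2) :=
      mul_nonneg (pow_pos hq0 _).le (by linarith)
    nlinarith [h8]
  have hN₃' : (C + lam*q + 1)/(|1-lam|/2) ≤ q^n := hN₃ n (by omega)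
  have hqnA : (q:ℝ)^n ≤ A := by rw [hA]; exact pow_le_pow_right₀ hq.le (by nlinarith)
  have h9 : C + lam*q + 1 ≤ |1-lam|/2 * A := by
    rw [div_le_iff₀ (by positivity)] at hN₃'
    nlinarith [hqnA, hδ]
  have hlamq : (0:ℝ) < lam*q := mul_pos hlam hq0
  have h10 : |1-lam| * A ≤ C + q^((j n)^2) + lam*q := by
    rcases abs_cases (1-lam) with ⟨he, -⟩ | ⟨he, -⟩ <;> rw [he] <;>
      linarith [habs.1, habs.2, mul_sub lam A q, hJpos, hlamq]
  linarith [h10, hJ2, hq2n, h9]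

/-- Corollary 5.9: for reals `q > 1` and `λ > 0` and
`X = {q^{n²} : n ≥ 1} ⊆ ℝ`, some correspondence `R` between `X` and `X` has
`sup { |d(x,x') − λ·d(y,y')| } < ∞` iff `λ = 1`. -/
theorem stabilizer_trivial_square_exponents (q lam : ℝ) (hq : 1 < q) (hlam : 0 < lam)
    (Xs : Set ℝ)
    (hXs : Xs = {x : ℝ | ∃ n : ℕ, 1 ≤ n ∧ x = q ^ ((n : ℝ) ^ 2)}) :
    (∃ R : Set (Xs × Xs), IsCorrespondence R ∧ disScaled lam R < ⊤) ↔ lam = 1 := by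
  subst hXs
  have cast_eq : ∀ n : ℕ, q ^ ((n:ℝ)^2) = q ^ (n^2) := fun n => by
    rw [show ((n:ℝ)^2) = (((n^2:ℕ)):ℝ) by push_cast; ring, Real.rpow_natCast]
  have hmem : ∀ n : ℕ, 1 ≤ n →
      (q:ℝ)^(n^2) ∈ {x : ℝ | ∃ k : ℕ, 1 ≤ k ∧ x = q ^ ((k:ℝ)^2)} :=
    fun n hn => ⟨n, hn, (cast_eq n).symm⟩
  constructor
  · rintro ⟨R, ⟨hR1, hR2⟩, hfin⟩
    have hCb : ∀ p ∈ R, ∀ p' ∈ R,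
        |dist p.1 p'.1 - lam * dist p.2 p'.2| ≤ (disScaled lam R).toReal := by
      intro p hp p' hp'
      have h1 : ENNReal.ofReal |dist p.1 p'.1 - lam * dist p.2 p'.2| ≤ disScaled lam R := by
        refine le_trans ?_ (le_iSup₂ (f := fun r (_ : r ∈ R) =>
          ⨆ s ∈ R, ENNReal.ofReal |dist r.1 s.1 - lam * dist r.2 s.2|) p hp)
        exact le_iSup₂ (f := fun s (_ : s ∈ R) =>
          ENNReal.ofReal |dist p.1 s.1 - lam * dist p.2 s.2|) p' hp'
      exact (ENNReal.ofReal_le_iff_le_toReal hfin.ne).mp h1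
    have hq0 : (0:ℝ) < q := lt_trans one_pos hq
    have H : ∀ n : ℕ, ∃ M J : ℕ, 1 ≤ J ∧ J ≤ M ∧
        |q ^ (M^2) - q ^ (J^2) - lam * (q ^ ((n+1)^2) - q)| ≤ (disScaled lam R).toReal := by
      intro n
      obtain ⟨x, hx⟩ := hR2 ⟨(q:ℝ)^((n+1)^2), hmem (n+1) (by omega)⟩
      obtain ⟨x', hx'⟩ := hR2 ⟨q, by simpa using hmem 1 le_rfl⟩
      obtain ⟨a, ha1, ha2⟩ := x.2
      obtain ⟨c, hc1, hc2⟩ := x'.2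
      refine ⟨max a c, min a c, le_min ha1 hc1, min_le_max, ?_⟩
      have hdist : dist x x' = (q:ℝ)^((max a c)^2) - q^((min a c)^2) := by
        rw [Subtype.dist_eq, Real.dist_eq, ha2, hc2, cast_eq, cast_eq]
        rcases le_total a c with h | h
        · rw [abs_sub_comm,
            abs_of_nonneg (sub_nonneg.mpr (pow_le_pow_right₀ hq.le (Nat.pow_le_pow_left h 2))),
            max_eq_right h, min_eq_left h]
        · rw [abs_of_nonneg (sub_nonneg.mpr (pow_le_pow_right₀ hq.le (Nat.pow_le_pow_left h 2))),
            max_eq_left h, min_eq_right h]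
      have hdisty : dist (⟨(q:ℝ)^((n+1)^2), hmem (n+1) (by omega)⟩ :
            {x : ℝ | ∃ k : ℕ, 1 ≤ k ∧ x = q ^ ((k:ℝ)^2)})
          ⟨q, by simpa using hmem 1 le_rfl⟩ = (q:ℝ)^((n+1)^2) - q := by
        rw [Subtype.dist_eq, Real.dist_eq]
        apply abs_of_nonneg
        have : q = q^1 := (pow_one q).symm
        nlinarith [pow_le_pow_right₀ hq.le (Nat.one_le_pow 2 (n+1) (by omega)), pow_one q]
      have hfinal := hCb (x, _) hx (x', _) hx'
      rw [show ((x, _) : _ × _).1 = x from rfl] at hfinal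
      simpa [hdist, hdisty] using hfinal
    exact key_lemma_s14 q lam _ hq hlam ENNReal.toReal_nonneg H
  · rintro rfl
    refine ⟨{p | p.1 = p.2}, ⟨fun x => ⟨x, rfl⟩, fun y => ⟨y, rfl⟩⟩, ?_⟩
    have hle : disScaled 1 {p : ({x : ℝ | ∃ n : ℕ, 1 ≤ n ∧ x = q ^ ((n:ℝ)^2)} : Set ℝ) ×
        {x : ℝ | ∃ n : ℕ, 1 ≤ n ∧ x = q ^ ((n:ℝ)^2)} | p.1 = p.2} ≤ 0 := by
      refine iSup₂_le fun p hp => iSup₂_le fun p' hp' => ?_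
      have hp : p.1 = p.2 := hp
      have hp' : p'.1 = p'.2 := hp'
      rw [hp, hp', one_mul, sub_self, abs_zero, ENNReal.ofReal_zero]
    exact lt_of_le_of_lt hle (by norm_num)
end
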